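/- arXiv:2312.13638 — 8 statements merged into one kernel-verified Lean document; each statement's English description precedes it below -/
import Mathlib

section
/- Let G be a cubic graph and M = {M₁, M₂, M₃} three perfect matchings of G with M₁ ∩ M₂ ∩ M₃ = ∅. Then the core of M (the subgraph formed by the edges lying in 0 or 2 of the matchings) is 2-regular on its vertex set, i.e., every vertex incident with a core edge is incident with exactly two core edges. -/
open Finset

def SimpleGraph.IsCubic {V : Type*} [Fintype V] (G : SimpleGraph V)
    [DecidableRel G.Adj] : Prop :=
  ∀ v : V, G.degree v = 3

def SimpleGraph.IsPM {V : Type*} (G : SimpleGraph V) (M : Finset (Sym2 V)) : Prop :=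
  (↑M ⊆ G.edgeSet) ∧ ∀ v : V, ∃! e, e ∈ M ∧ v ∈ e

def cov {V : Type*} [DecidableEq V] (M₁ M₂ M₃ : Finset (Sym2 V)) (e : Sym2 V) : ℕ :=
  (if e ∈ M₁ then 1 else 0) + (if e ∈ M₂ then 1 else 0) + (if e ∈ M₃ then 1 else 0)

theorem core_two_regular {V : Type*} [Fintype V] [DecidableEq V]
    (G : SimpleGraph V) [DecidableRel G.Adj] (hG : G.IsCubic)
    (M₁ M₂ M₃ : Finset (Sym2 V)) (h₁ : G.IsPM M₁) (h₂ : G.IsPM M₂) (h₃ : G.IsPM M₃)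
    (hreg : M₁ ∩ M₂ ∩ M₃ = ∅) (v : V)
    (hv : ∃ e ∈ G.edgeFinset, v ∈ e ∧ (cov M₁ M₂ M₃ e = 0 ∨ cov M₁ M₂ M₃ e = 2)) :
    (G.edgeFinset.filter
      (fun f => v ∈ f ∧ (cov M₁ M₂ M₃ f = 0 ∨ cov M₁ M₂ M₃ f = 2))).card = 2 := by
  classical
  set S := G.edgeFinset.filter (fun f => v ∈ f) with hS
  have hScard : S.card = 3 := by
    have hSeq : S = G.incidenceFinset v := by
      ext e
      simp [hS, SimpleGraph.mem_incidenceFinset, SimpleGraph.incidenceSet, and_comm]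
    rw [hSeq, SimpleGraph.card_incidenceFinset_eq_degree]
    exact hG v
  have hone : ∀ M : Finset (Sym2 V), G.IsPM M → (S.filter (· ∈ M)).card = 1 := by
    intro M hM
    obtain ⟨e₀, ⟨hm, hvm⟩, huniq⟩ := hM.2 v
    rw [Finset.card_eq_one]
    refine ⟨e₀, ?_⟩
    ext f
    simp only [hS, Finset.mem_filter, Finset.mem_singleton, SimpleGraph.mem_edgeFinset]
    constructor
    · rintro ⟨⟨hf, hvf⟩, hfm⟩
      exact huniq f ⟨hfm, hvf⟩
    · rintro rfl
      exact ⟨⟨hM.1 hm, hvm⟩, hm⟩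
  have hsum : ∑ e ∈ S, cov M₁ M₂ M₃ e = 3 := by
    unfold cov
    rw [Finset.sum_add_distrib, Finset.sum_add_distrib,
      ← Finset.card_filter, ← Finset.card_filter, ← Finset.card_filter,
      hone M₁ h₁, hone M₂ h₂, hone M₃ h₃]
  have hle : ∀ e ∈ S, cov M₁ M₂ M₃ e ≤ 2 := by
    intro e _
    by_contra h
    have h1 : e ∈ M₁ ∧ e ∈ M₂ ∧ e ∈ M₃ := by
      by_cases a : e ∈ M₁ <;> by_cases b : e ∈ M₂ <;> by_cases c : e ∈ M₃ <;>
        simp [cov, a, b, c] at h ⊢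
    have hmem : e ∈ M₁ ∩ M₂ ∩ M₃ := by
      simp [Finset.mem_inter, h1.1, h1.2.1, h1.2.2]
    rw [hreg] at hmem
    exact absurd hmem (Finset.notMem_empty e)
  have hgoal : G.edgeFinset.filter
      (fun f => v ∈ f ∧ (cov M₁ M₂ M₃ f = 0 ∨ cov M₁ M₂ M₃ f = 2))
      = S.filter (fun f => cov M₁ M₂ M₃ f = 0 ∨ cov M₁ M₂ M₃ f = 2) := by
    rw [hS, Finset.filter_filter]
  obtain ⟨e₁, e₂, e₃, h12, h13, h23, hS3⟩ := Finset.card_eq_three.mp hScard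
  have hvS : ∃ e ∈ S, cov M₁ M₂ M₃ e = 0 ∨ cov M₁ M₂ M₃ e = 2 := by
    obtain ⟨e, he, hev, hc⟩ := hv
    exact ⟨e, by simp [hS, he, hev], hc⟩
  have m1 : e₁ ∈ S := by rw [hS3]; simp
  have m2 : e₂ ∈ S := by rw [hS3]; simp
  have m3 : e₃ ∈ S := by rw [hS3]; simp
  have hl1 := hle e₁ m1
  have hl2 := hle e₂ m2
  have hl3 := hle e₃ m3
  rw [hS3] at hsum hvS
  rw [hgoal, hS3, Finset.card_filter]
  rw [Finset.sum_insert (by simp [h12, h13]), Finset.sum_insert (by simp [h23]),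
    Finset.sum_singleton] at hsum ⊢
  have hv3 : (cov M₁ M₂ M₃ e₁ = 0 ∨ cov M₁ M₂ M₃ e₁ = 2) ∨
      (cov M₁ M₂ M₃ e₂ = 0 ∨ cov M₁ M₂ M₃ e₂ = 2) ∨
      (cov M₁ M₂ M₃ e₃ = 0 ∨ cov M₁ M₂ M₃ e₃ = 2) := by
    obtain ⟨e, he, hc⟩ := hvS
    simp only [Finset.mem_insert, Finset.mem_singleton] at he
    rcases he with rfl | rfl | rfl <;> tauto
  split_ifs <;> omega
end

section
/- Let G be a cubic graph and M = {M₁, M₂, M₃} three perfect matchings with empty intersection M₁ ∩ M₂ ∩ M₃ = ∅. Then every connected component of the core of M is an even circuit in which uncovered edges and doubly covered edges alternate. -/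
open Finset

/-- The core of a 3-array with empty intersection: the subgraph formed by the edges
lying in 0 or 2 of the three matchings. -/
def coreGraph {V : Type*} [DecidableEq V] (G : SimpleGraph V)
    (M₁ M₂ M₃ : Finset (Sym2 V)) : SimpleGraph V where
  Adj u v := G.Adj u v ∧ (cov M₁ M₂ M₃ s(u, v) = 0 ∨ cov M₁ M₂ M₃ s(u, v) = 2)
  symm := by
    constructor
    intro u v h
    exact ⟨h.1.symm, by rw [Sym2.eq_swap]; exact h.2⟩
  loopless := by
    constructor
    intro v h
    exact G.loopless.irrefl v h.1

lemma even_card_of_involution {α : Type*} [DecidableEq α] :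
    ∀ (s : Finset α) (f : α → α), (∀ a ∈ s, f a ∈ s) → (∀ a ∈ s, f (f a) = a) →
    (∀ a ∈ s, f a ≠ a) → Even s.card := by
  intro s
  induction s using Finset.strongInduction with
  | _ s ih =>
    intro f hmem hinv hne
    rcases s.eq_empty_or_nonempty with rfl | ⟨a, ha⟩
    · simp
    · have hfa := hmem a ha
      have hne' := hne a ha
      have hsub : ({a, f a} : Finset α) ⊆ s := by
        intro x hx; simp only [Finset.mem_insert, Finset.mem_singleton] at hx
        rcases hx with rfl | rfl
        exacts [ha, hfa]
      have hss : s \ {a, f a} ⊂ s :=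
        Finset.sdiff_ssubset hsub (by simp)
      have hpair : ({a, f a} : Finset α).card = 2 := Finset.card_pair (Ne.symm hne')
      have hcard : s.card = (s \ {a, f a}).card + 2 := by
        rw [Finset.card_sdiff_of_subset hsub, hpair]
        have := Finset.card_le_card hsub
        omega
      have heven : Even ((s \ {a, f a}).card) := by
        apply ih _ hss f
        · intro b hb
          simp only [Finset.mem_sdiff, Finset.mem_insert, Finset.mem_singleton] at hb ⊢
          obtain ⟨hb, hb'⟩ := hb
          push_neg at hb'
          obtain ⟨hb1, hb2⟩ := hb'
          refine ⟨hmem b hb, ?_⟩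
          push_neg
          constructor
          · rintro rfl; exact hb2 (hinv b hb).symm
          · intro h; exact hb1 (by rw [← hinv b hb, h, hinv a ha])
        · intro b hb; exact hinv b (Finset.mem_sdiff.mp hb).1
        · intro b hb; exact hne b (Finset.mem_sdiff.mp hb).1
      rw [hcard]
      exact heven.add (by norm_num)
open Finset

lemma cov_le_three {V : Type*} [DecidableEq V] (M₁ M₂ M₃ : Finset (Sym2 V)) (f : Sym2 V) :
    cov M₁ M₂ M₃ f ≤ 3 := by
  unfold cov; split_ifs <;> omega

lemma core_key {V : Type*} [Fintype V] [DecidableEq V] (G : SimpleGraph V) [DecidableRel G.Adj]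
    (hG : G.IsCubic) (M₁ M₂ M₃ : Finset (Sym2 V)) (h₁ : G.IsPM M₁) (h₂ : G.IsPM M₂)
    (h₃ : G.IsPM M₃) (hreg : M₁ ∩ M₂ ∩ M₃ = ∅) (v : V)
    (hv : ∃ u, (coreGraph G M₁ M₂ M₃).Adj v u) :
    (G.edgeFinset.filter (fun f => v ∈ f ∧ cov M₁ M₂ M₃ f = 0)).card = 1 ∧
    (G.edgeFinset.filter (fun f => v ∈ f ∧ cov M₁ M₂ M₃ f = 2)).card = 1 := by
  classical
  set S : Finset (Sym2 V) := G.edgeFinset.filter (fun f => v ∈ f) with hSdef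
  have hS3 : S.card = 3 := by
    rw [hSdef, ← SimpleGraph.incidenceFinset_eq_filter, SimpleGraph.card_incidenceFinset_eq_degree,
      hG v]
  -- each matching contributes exactly one edge at v
  have hM : ∀ (M : Finset (Sym2 V)), G.IsPM M → (S.filter (fun f => f ∈ M)).card = 1 := by
    intro M hM
    obtain ⟨e, ⟨heM, hev⟩, hu⟩ := hM.2 v
    have : S.filter (fun f => f ∈ M) = {e} := by
      ext f
      simp only [hSdef, Finset.mem_filter, Finset.mem_singleton, SimpleGraph.mem_edgeFinset]
      constructor
      · rintro ⟨⟨_, hvf⟩, hfM⟩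
        exact hu f ⟨hfM, hvf⟩
      · rintro rfl
        exact ⟨⟨hM.1 heM, hev⟩, heM⟩
    rw [this, Finset.card_singleton]
  have hsum : ∑ f ∈ S, cov M₁ M₂ M₃ f = 3 := by
    unfold cov
    rw [Finset.sum_add_distrib, Finset.sum_add_distrib]
    simp only [Finset.sum_boole, Nat.cast_id]
    rw [hM M₁ h₁, hM M₂ h₂, hM M₃ h₃]
  set n0 := (S.filter (fun f => cov M₁ M₂ M₃ f = 0)).card with hn0
  set n1 := (S.filter (fun f => cov M₁ M₂ M₃ f = 1)).card with hn1
  set n2 := (S.filter (fun f => cov M₁ M₂ M₃ f = 2)).card with hn2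
  set n3 := (S.filter (fun f => cov M₁ M₂ M₃ f = 3)).card with hn3
  have hn3z : n3 = 0 := by
    rw [hn3, Finset.card_eq_zero, Finset.filter_eq_empty_iff]
    intro f _ hcov
    have hf1 : f ∈ M₁ := by by_contra hc; simp only [cov, if_neg hc] at hcov; split_ifs at hcov <;> omega
    have hf2 : f ∈ M₂ := by by_contra hc; simp only [cov, if_neg hc] at hcov; split_ifs at hcov <;> omega
    have hf3 : f ∈ M₃ := by by_contra hc; simp only [cov, if_neg hc] at hcov; split_ifs at hcov <;> omega
    have : f ∈ M₁ ∩ M₂ ∩ M₃ := by simp [hf1, hf2, hf3]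
    rw [hreg] at this
    exact absurd this (Finset.notMem_empty f)
  have hpart : n0 + n1 + n2 + n3 = 3 := by
    have h1 : ∀ f ∈ S, ((if cov M₁ M₂ M₃ f = 0 then 1 else 0) +
        (if cov M₁ M₂ M₃ f = 1 then 1 else 0) + (if cov M₁ M₂ M₃ f = 2 then 1 else 0) +
        (if cov M₁ M₂ M₃ f = 3 then 1 else 0) : ℕ) = 1 := by
      intro f _
      have := cov_le_three M₁ M₂ M₃ f
      split_ifs <;> omega
    have h2 := Finset.sum_congr rfl h1
    simp only [Finset.sum_add_distrib, Finset.sum_boole, Nat.cast_id, Finset.sum_const,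
      smul_eq_mul, mul_one] at h2
    rw [hn0, hn1, hn2, hn3, h2, hS3]
  have hwt : n1 + 2 * n2 + 3 * n3 = 3 := by
    have h1 : ∀ f ∈ S, cov M₁ M₂ M₃ f = (if cov M₁ M₂ M₃ f = 1 then 1 else 0) +
        2 * (if cov M₁ M₂ M₃ f = 2 then 1 else 0) + 3 * (if cov M₁ M₂ M₃ f = 3 then 1 else 0) := by
      intro f _
      have := cov_le_three M₁ M₂ M₃ f
      split_ifs <;> omega
    have h2 := Finset.sum_congr rfl h1
    rw [hsum] at h2
    simp only [Finset.sum_add_distrib, ← Finset.mul_sum, Finset.sum_boole, Nat.cast_id] at h2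
    rw [hn1, hn2, hn3]
    omega
  have h02 : 1 ≤ n0 + n2 := by
    obtain ⟨u, hadj, hcov⟩ := hv
    have hmem : s(v, u) ∈ S := by
      rw [hSdef, Finset.mem_filter, SimpleGraph.mem_edgeFinset]
      exact ⟨(G.mem_edgeSet).mpr hadj, Sym2.mem_mk_left v u⟩
    rcases hcov with h | h
    · have : 1 ≤ n0 := Finset.card_pos.mpr ⟨s(v, u), Finset.mem_filter.mpr ⟨hmem, h⟩⟩
      omega
    · have : 1 ≤ n2 := Finset.card_pos.mpr ⟨s(v, u), Finset.mem_filter.mpr ⟨hmem, h⟩⟩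
      omega
  have hres : n0 = 1 ∧ n2 = 1 := by omega
  constructor
  · rw [← hres.1, hn0, hSdef, Finset.filter_filter]
  · rw [← hres.2, hn2, hSdef, Finset.filter_filter]
open scoped Classical in
lemma core_pair_unique {V : Type*} [Fintype V] [DecidableEq V] (G : SimpleGraph V)
    [DecidableRel G.Adj] (hG : G.IsCubic) (M₁ M₂ M₃ : Finset (Sym2 V)) (h₁ : G.IsPM M₁)
    (h₂ : G.IsPM M₂) (h₃ : G.IsPM M₃) (hreg : M₁ ∩ M₂ ∩ M₃ = ∅) (u : V)
    (hu : ∃ w, (coreGraph G M₁ M₂ M₃).Adj u w) :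
    ∃! b, G.Adj u b ∧ cov M₁ M₂ M₃ s(u, b) = 0 := by
  have hkey := (core_key G hG M₁ M₂ M₃ h₁ h₂ h₃ hreg u hu).1
  obtain ⟨e, he⟩ := Finset.card_eq_one.mp hkey
  rw [Finset.eq_singleton_iff_unique_mem] at he
  obtain ⟨hemem, heuniq⟩ := he
  rw [Finset.mem_filter, SimpleGraph.mem_edgeFinset] at hemem
  obtain ⟨heE, heu, hec⟩ := hemem
  set b := Sym2.Mem.other' heu with hb
  have hspec : s(u, b) = e := Sym2.other_spec' heu
  refine ⟨b, ⟨?_, ?_⟩, ?_⟩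
  · rw [← SimpleGraph.mem_edgeSet, hspec]; exact heE
  · rw [hspec]; exact hec
  · intro b' ⟨hb'adj, hb'cov⟩
    have : s(u, b') = e := by
      apply heuniq
      rw [Finset.mem_filter, SimpleGraph.mem_edgeFinset, SimpleGraph.mem_edgeSet]
      exact ⟨hb'adj, Sym2.mem_mk_left u b', hb'cov⟩
    rw [← hspec] at this
    exact Sym2.congr_right.mp this

lemma core_nbr_of_component {V : Type*} [Fintype V] [DecidableEq V] (G : SimpleGraph V)
    (M₁ M₂ M₃ : Finset (Sym2 V)) {u v : V}
    (hv : ∃ w, (coreGraph G M₁ M₂ M₃).Adj v w)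
    (h : (coreGraph G M₁ M₂ M₃).connectedComponentMk u =
      (coreGraph G M₁ M₂ M₃).connectedComponentMk v) :
    ∃ w, (coreGraph G M₁ M₂ M₃).Adj u w := by
  by_cases huv : u = v
  · subst huv; exact hv
  · obtain ⟨p⟩ := SimpleGraph.ConnectedComponent.exact h
    cases p with
    | nil => exact absurd rfl huv
    | cons hadj _ => exact ⟨_, hadj⟩

open scoped Classical in
noncomputable def pairFn {V : Type*} [DecidableEq V] (G : SimpleGraph V)
    (M₁ M₂ M₃ : Finset (Sym2 V)) : V → V := fun u =>
  if h : ∃ b, G.Adj u b ∧ cov M₁ M₂ M₃ s(u, b) = 0 then h.choose else u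

lemma pairFn_spec {V : Type*} [DecidableEq V] (G : SimpleGraph V)
    (M₁ M₂ M₃ : Finset (Sym2 V)) {u : V} (h : ∃ b, G.Adj u b ∧ cov M₁ M₂ M₃ s(u, b) = 0) :
    G.Adj u (pairFn G M₁ M₂ M₃ u) ∧ cov M₁ M₂ M₃ s(u, pairFn G M₁ M₂ M₃ u) = 0 := by
  rw [pairFn, dif_pos h]
  exact h.choose_spec


open scoped Classical in
/-- Every connected component of the core is an even circuit alternating uncovered
and doubly covered edges: every vertex of the core lies on exactly one uncovered
and exactly one doubly covered edge (so the core is 2-regular and alternating),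
and each component of the core has an even number of vertices (hence even length). -/
theorem core_components_even_alternating_circuits {V : Type*} [Fintype V]
    [DecidableEq V] (G : SimpleGraph V) [DecidableRel G.Adj] (hG : G.IsCubic)
    (M₁ M₂ M₃ : Finset (Sym2 V)) (h₁ : G.IsPM M₁) (h₂ : G.IsPM M₂) (h₃ : G.IsPM M₃)
    (hreg : M₁ ∩ M₂ ∩ M₃ = ∅) :
    ∀ v : V, (∃ u, (coreGraph G M₁ M₂ M₃).Adj v u) →
      ((G.edgeFinset.filter (fun f => v ∈ f ∧ cov M₁ M₂ M₃ f = 0)).card = 1 ∧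
       (G.edgeFinset.filter (fun f => v ∈ f ∧ cov M₁ M₂ M₃ f = 2)).card = 1 ∧
       (Finset.univ.filter (fun u => (coreGraph G M₁ M₂ M₃).Adj v u)).card = 2) ∧
      Even ((Finset.univ.filter (fun u =>
        (coreGraph G M₁ M₂ M₃).connectedComponentMk u =
          (coreGraph G M₁ M₂ M₃).connectedComponentMk v)).card) := by
  intro v hv
  have hkey := core_key G hG M₁ M₂ M₃ h₁ h₂ h₃ hreg v hv
  refine ⟨⟨hkey.1, hkey.2, ?_⟩, ?_⟩
  · -- the core degree of v is 2
    have hbij : (Finset.univ.filter (fun u => (coreGraph G M₁ M₂ M₃).Adj v u)).card =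
        (G.edgeFinset.filter
          (fun f => v ∈ f ∧ (cov M₁ M₂ M₃ f = 0 ∨ cov M₁ M₂ M₃ f = 2))).card := by
      apply Finset.card_bij (fun u _ => s(v, u))
      · intro u hu
        rw [Finset.mem_filter] at hu
        obtain ⟨-, hadj, hc⟩ := hu
        rw [Finset.mem_filter, SimpleGraph.mem_edgeFinset, SimpleGraph.mem_edgeSet]
        exact ⟨hadj, Sym2.mem_mk_left v u, hc⟩
      · intro a _ b _ h
        exact Sym2.congr_right.mp h
      · intro f hf
        rw [Finset.mem_filter, SimpleGraph.mem_edgeFinset] at hf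
        obtain ⟨hfE, hvf, hc⟩ := hf
        refine ⟨Sym2.Mem.other' hvf, ?_, Sym2.other_spec' hvf⟩
        rw [Finset.mem_filter]
        refine ⟨Finset.mem_univ _, ?_, ?_⟩
        · rw [← SimpleGraph.mem_edgeSet, Sym2.other_spec' hvf]
          exact hfE
        · rw [Sym2.other_spec' hvf]
          exact hc
    rw [hbij]
    have hsplit : (G.edgeFinset.filter
          (fun f => v ∈ f ∧ (cov M₁ M₂ M₃ f = 0 ∨ cov M₁ M₂ M₃ f = 2))) =
        (G.edgeFinset.filter (fun f => v ∈ f ∧ cov M₁ M₂ M₃ f = 0)) ∪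
        (G.edgeFinset.filter (fun f => v ∈ f ∧ cov M₁ M₂ M₃ f = 2)) := by
      ext f
      simp only [Finset.mem_filter, Finset.mem_union]
      tauto
    rw [hsplit, Finset.card_union_of_disjoint, hkey.1, hkey.2]
    rw [Finset.disjoint_left]
    intro f hf hf'
    rw [Finset.mem_filter] at hf hf'
    omega
  · -- evenness of the component of v
    set C := coreGraph G M₁ M₂ M₃ with hC
    set T := Finset.univ.filter
      (fun u => C.connectedComponentMk u = C.connectedComponentMk v) with hT
    have hTnbr : ∀ u ∈ T, ∃ w, C.Adj u w := by
      intro u hu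
      exact core_nbr_of_component G M₁ M₂ M₃ hv (Finset.mem_filter.mp hu).2
    have hEU : ∀ u ∈ T, ∃! b, G.Adj u b ∧ cov M₁ M₂ M₃ s(u, b) = 0 := fun u hu =>
      core_pair_unique G hG M₁ M₂ M₃ h₁ h₂ h₃ hreg u (hTnbr u hu)
    set f := pairFn G M₁ M₂ M₃ with hf
    have hfP : ∀ u ∈ T, G.Adj u (f u) ∧ cov M₁ M₂ M₃ s(u, f u) = 0 := by
      intro u hu
      obtain ⟨b, hb, -⟩ := hEU u hu
      exact pairFn_spec G M₁ M₂ M₃ ⟨b, hb⟩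
    have hfC : ∀ u ∈ T, C.Adj u (f u) := by
      intro u hu
      exact ⟨(hfP u hu).1, Or.inl (hfP u hu).2⟩
    have hfT : ∀ u ∈ T, f u ∈ T := by
      intro u hu
      rw [hT, Finset.mem_filter]
      refine ⟨Finset.mem_univ _, ?_⟩
      rw [← (SimpleGraph.ConnectedComponent.connectedComponentMk_eq_of_adj (hfC u hu))]
      exact (Finset.mem_filter.mp hu).2
    apply even_card_of_involution T f hfT
    · intro u hu
      have hufu := hfP u hu
      have hfu : f u ∈ T := hfT u hu
      have hP : G.Adj (f u) u ∧ cov M₁ M₂ M₃ s(f u, u) = 0 :=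
        ⟨hufu.1.symm, by rw [Sym2.eq_swap]; exact hufu.2⟩
      obtain ⟨b, -, hbuniq⟩ := hEU (f u) hfu
      have e1 := hbuniq (f (f u)) (hfP (f u) hfu)
      have e2 := hbuniq u hP
      rw [e1, e2]
    · intro u hu
      exact ((hfP u hu).1.ne).symm
end

section
/- Let G be a cubic graph that is not 3-edge-colourable (a snark). Then for every collection of three perfect matchings M₁, M₂, M₃ of G, at least 3 edges of G are left uncovered, i.e., |E(G) \ (M₁ ∪ M₂ ∪ M₃)| ≥ 3. Hence the defect df(G) of any snark is at least 3. -/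
open Finset

def SimpleGraph.IsProper3EdgeColouring {V : Type*} (G : SimpleGraph V)
    (σ : Sym2 V → ZMod 2 × ZMod 2) : Prop :=
  (∀ e ∈ G.edgeSet, σ e ≠ 0) ∧
  ∀ e ∈ G.edgeSet, ∀ f ∈ G.edgeSet, e ≠ f → ∀ v : V, v ∈ e → v ∈ f → σ e ≠ σ f

/-- A 2-connected graph: connected, and still connected after deleting any vertex. -/
def SimpleGraph.TwoConnected {V : Type*} (G : SimpleGraph V) : Prop :=
  G.Connected ∧ ∀ v : V, (G.induce {u | u ≠ v}).Connected

/-- A snark: a 2-connected cubic graph with no proper 3-edge-colouring. -/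
def SimpleGraph.IsSnark {V : Type*} [Fintype V] (G : SimpleGraph V)
    [DecidableRel G.Adj] : Prop :=
  G.IsCubic ∧ G.TwoConnected ∧
    ¬ ∃ σ : Sym2 V → ZMod 2 × ZMod 2, G.IsProper3EdgeColouring σ

namespace SnarkAux

variable {V : Type*} [Fintype V] [DecidableEq V]

/-- Multiplicity of an edge in a triple of matchings. -/
def mult (M₁ M₂ M₃ : Finset (Sym2 V)) (e : Sym2 V) : ℕ :=
  (if e ∈ M₁ then 1 else 0) + (if e ∈ M₂ then 1 else 0) + (if e ∈ M₃ then 1 else 0)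

lemma mult_le_three (M₁ M₂ M₃ : Finset (Sym2 V)) (e : Sym2 V) :
    mult M₁ M₂ M₃ e ≤ 3 := by
  unfold mult; split_ifs <;> omega

lemma mult_eq_zero_iff {M₁ M₂ M₃ : Finset (Sym2 V)} {e : Sym2 V} :
    mult M₁ M₂ M₃ e = 0 ↔ e ∉ M₁ ∧ e ∉ M₂ ∧ e ∉ M₃ := by
  unfold mult; split_ifs <;> simp_all

lemma mult_eq_two_cases {M₁ M₂ M₃ : Finset (Sym2 V)} {e : Sym2 V}
    (h : mult M₁ M₂ M₃ e = 2) :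
    (e ∈ M₁ ∧ e ∈ M₂ ∧ e ∉ M₃) ∨ (e ∈ M₁ ∧ e ∉ M₂ ∧ e ∈ M₃) ∨
      (e ∉ M₁ ∧ e ∈ M₂ ∧ e ∈ M₃) := by
  unfold mult at h; split_ifs at h <;> simp_all

lemma edge_eq {u v : V} {e : Sym2 V} (hu : u ∈ e) (hv : v ∈ e) (huv : u ≠ v) :
    e = s(u, v) :=
  (Sym2.mem_and_mem_iff huv).1 ⟨hu, hv⟩

variable {G : SimpleGraph V} [DecidableRel G.Adj]

lemma other_endpoint {e : Sym2 V} {a : V} (he : e ∈ G.edgeSet) (ha : a ∈ e) :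
    ∃ a', a ≠ a' ∧ e = s(a, a') := by
  induction e with
  | _ x y =>
    rw [SimpleGraph.mem_edgeSet] at he
    rcases Sym2.mem_iff.1 ha with rfl | rfl
    · exact ⟨y, he.ne, rfl⟩
    · exact ⟨x, he.ne', by rw [Sym2.eq_swap]⟩

/-- If three perfect matchings cover all edges of a snark, contradiction. -/
lemma endpoints {e : Sym2 V} (he : e ∈ G.edgeSet) : ∃ u w : V, u ≠ w ∧ e = s(u, w) := by
  induction e with
  | _ x y => exact ⟨x, y, ((SimpleGraph.mem_edgeSet G).1 he).ne, rfl⟩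

lemma no_cover (hG : G.IsSnark) (N₁ N₂ N₃ : Finset (Sym2 V))
    (h₁ : G.IsPM N₁) (h₂ : G.IsPM N₂) (h₃ : G.IsPM N₃)
    (hcov : ∀ e ∈ G.edgeFinset, e ∈ N₁ ∨ e ∈ N₂ ∨ e ∈ N₃) : False := by
  apply hG.2.2
  refine ⟨fun e => if e ∈ N₁ then ((1 : ZMod 2), (0 : ZMod 2)) else
    if e ∈ N₂ then (0, 1) else if e ∈ N₃ then (1, 1) else 0, ?_, ?_⟩
  · intro e he
    rcases hcov e (SimpleGraph.mem_edgeFinset.2 he) with h | h | h <;>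
      by_cases hA : e ∈ N₁ <;> by_cases hB : e ∈ N₂ <;> by_cases hC : e ∈ N₃ <;>
      simp_all <;> decide
  · intro e he f hf hef v hve hvf
    have hecov := hcov e (SimpleGraph.mem_edgeFinset.2 he)
    have hfcov := hcov f (SimpleGraph.mem_edgeFinset.2 hf)
    by_cases hA : e ∈ N₁ <;> by_cases hB : e ∈ N₂ <;> by_cases hC : e ∈ N₃ <;>
      by_cases hA' : f ∈ N₁ <;> by_cases hB' : f ∈ N₂ <;> by_cases hC' : f ∈ N₃ <;>
      simp_all <;>
      first
        | exact hef ((h₁.2 v).unique ⟨hA, hve⟩ ⟨hA', hvf⟩)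
        | exact hef ((h₂.2 v).unique ⟨hB, hve⟩ ⟨hB', hvf⟩)
        | exact hef ((h₃.2 v).unique ⟨hC, hve⟩ ⟨hC', hvf⟩)
        | decide

lemma sum_one (v : V) {M : Finset (Sym2 V)} (hM : G.IsPM M) :
    ∑ e ∈ G.incidenceFinset v, (if e ∈ M then 1 else 0) = 1 := by
  obtain ⟨e₀, ⟨he₀M, he₀v⟩, huniq⟩ := hM.2 v
  have hfil : (G.incidenceFinset v).filter (· ∈ M) = {e₀} := by
    ext e
    simp only [Finset.mem_filter, SimpleGraph.mem_incidenceFinset, Finset.mem_singleton]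
    constructor
    · rintro ⟨⟨-, hev⟩, heM⟩
      exact huniq e ⟨heM, hev⟩
    · rintro rfl
      exact ⟨⟨hM.1 he₀M, he₀v⟩, he₀M⟩
  rw [← Finset.sum_filter, hfil, Finset.sum_singleton]

/-- Local structure at a vertex: the two other edges. -/
lemma local3 (hcub : G.IsCubic) {M₁ M₂ M₃ : Finset (Sym2 V)}
    (h₁ : G.IsPM M₁) (h₂ : G.IsPM M₂) (h₃ : G.IsPM M₃)
    {e : Sym2 V} {v : V} (he : e ∈ G.edgeFinset) (hv : v ∈ e) :
    ∃ f g : Sym2 V, e ≠ f ∧ e ≠ g ∧ f ≠ g ∧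
      f ∈ G.edgeFinset ∧ v ∈ f ∧ g ∈ G.edgeFinset ∧ v ∈ g ∧
      mult M₁ M₂ M₃ e + mult M₁ M₂ M₃ f + mult M₁ M₂ M₃ g = 3 ∧
      (∀ h, h ∈ G.edgeFinset → v ∈ h → h = e ∨ h = f ∨ h = g) := by
  have hsum : ∑ x ∈ G.incidenceFinset v, mult M₁ M₂ M₃ x = 3 := by
    unfold mult
    rw [Finset.sum_add_distrib, Finset.sum_add_distrib,
      sum_one v h₁, sum_one v h₂, sum_one v h₃]
  have hcard : (G.incidenceFinset v).card = 3 := by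
    rw [SimpleGraph.card_incidenceFinset_eq_degree]; exact hcub v
  have heI : e ∈ G.incidenceFinset v := by
    rw [SimpleGraph.mem_incidenceFinset]
    exact ⟨SimpleGraph.mem_edgeFinset.1 he, hv⟩
  have h2 : ((G.incidenceFinset v).erase e).card = 2 := by
    rw [Finset.card_erase_of_mem heI, hcard]
  obtain ⟨f, g, hfg, hfgE⟩ := Finset.card_eq_two.mp h2
  have hfE' : f ∈ (G.incidenceFinset v).erase e := by rw [hfgE]; simp
  have hgE' : g ∈ (G.incidenceFinset v).erase e := by rw [hfgE]; simp
  have hfI : f ∈ G.incidenceFinset v := Finset.mem_of_mem_erase hfE'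
  have hgI : g ∈ G.incidenceFinset v := Finset.mem_of_mem_erase hgE'
  have hef : e ≠ f := ((Finset.mem_erase.1 hfE').1).symm
  have heg : e ≠ g := ((Finset.mem_erase.1 hgE').1).symm
  have hIeq : G.incidenceFinset v = {e, f, g} := by
    rw [← Finset.insert_erase heI, hfgE]
  have hfmem : f ∈ G.incidenceSet v := by rwa [SimpleGraph.mem_incidenceFinset] at hfI
  have hgmem : g ∈ G.incidenceSet v := by rwa [SimpleGraph.mem_incidenceFinset] at hgI
  refine ⟨f, g, hef, heg, hfg, SimpleGraph.mem_edgeFinset.2 hfmem.1, hfmem.2,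
    SimpleGraph.mem_edgeFinset.2 hgmem.1, hgmem.2, ?_, ?_⟩
  · rw [hIeq] at hsum
    rw [Finset.sum_insert (by
        simp only [Finset.mem_insert, Finset.mem_singleton]
        push_neg
        exact ⟨hef, heg⟩), Finset.sum_pair hfg] at hsum
    omega
  · intro h hhE hhv
    have : h ∈ G.incidenceFinset v := by
      rw [SimpleGraph.mem_incidenceFinset]; exact ⟨SimpleGraph.mem_edgeFinset.1 hhE, hhv⟩
    rw [hIeq] at this
    simpa using this

lemma swap_contra (hG : G.IsSnark)
    (A B C : Finset (Sym2 V)) (hA : G.IsPM A) (hB : G.IsPM B) (hC : G.IsPM C)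
    {a b a' b' : V} (hab : a ≠ b) (hab' : a ≠ b') (ha'b : a' ≠ b) (ha'b' : a' ≠ b')
    (haa' : a ≠ a') (hbb' : b ≠ b')
    (he1 : s(a, b) ∈ G.edgeFinset) (he2 : s(a', b') ∈ G.edgeFinset)
    (hgaA : s(a, a') ∈ A) (hgbA : s(b, b') ∈ A)
    (hgaBC : s(a, a') ∈ B ∨ s(a, a') ∈ C) (hgbBC : s(b, b') ∈ B ∨ s(b, b') ∈ C)
    (hcov : ∀ e ∈ G.edgeFinset, e ≠ s(a, b) → e ≠ s(a', b') → e ∈ A ∨ e ∈ B ∨ e ∈ C) :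
    False := by
  set A' : Finset (Sym2 V) :=
    insert s(a, b) (insert s(a', b') ((A.erase s(a, a')).erase s(b, b'))) with hA'def
  have hsubA : ∀ {y : Sym2 V}, y ∈ (A.erase s(a, a')).erase s(b, b') → y ∈ A :=
    fun hy => Finset.mem_of_mem_erase (Finset.mem_of_mem_erase hy)
  have hnega : ∀ {y : Sym2 V}, y ∈ (A.erase s(a, a')).erase s(b, b') → y ≠ s(a, a') :=
    fun hy => (Finset.mem_erase.1 (Finset.mem_of_mem_erase hy)).1
  have hnegb : ∀ {y : Sym2 V}, y ∈ (A.erase s(a, a')).erase s(b, b') → y ≠ s(b, b') :=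
    fun hy => (Finset.mem_erase.1 hy).1
  have hA'PM : G.IsPM A' := by
    constructor
    · intro y hy
      rcases Finset.mem_insert.1 hy with rfl | hy
      · exact SimpleGraph.mem_edgeFinset.1 he1
      rcases Finset.mem_insert.1 hy with rfl | hy
      · exact SimpleGraph.mem_edgeFinset.1 he2
      · exact hA.1 (hsubA hy)
    · intro v
      by_cases hva : v = a
      · subst hva
        refine ⟨s(v, b), ⟨Finset.mem_insert_self _ _, Sym2.mem_mk_left _ _⟩, ?_⟩
        rintro y ⟨hy, hvy⟩
        rcases Finset.mem_insert.1 hy with rfl | hy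
        · rfl
        rcases Finset.mem_insert.1 hy with rfl | hy
        · rcases Sym2.mem_iff.1 hvy with h | h
          · exact absurd h haa'
          · exact absurd h hab'
        · exact absurd ((hA.2 v).unique ⟨hsubA hy, hvy⟩
            ⟨hgaA, Sym2.mem_mk_left _ _⟩) (hnega hy)
      by_cases hvb : v = b
      · subst hvb
        refine ⟨s(a, v), ⟨Finset.mem_insert_self _ _, Sym2.mem_mk_right _ _⟩, ?_⟩
        rintro y ⟨hy, hvy⟩
        rcases Finset.mem_insert.1 hy with rfl | hy
        · rfl
        rcases Finset.mem_insert.1 hy with rfl | hy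
        · rcases Sym2.mem_iff.1 hvy with h | h
          · exact absurd h.symm ha'b
          · exact absurd h hbb'
        · exact absurd ((hA.2 v).unique ⟨hsubA hy, hvy⟩
            ⟨hgbA, Sym2.mem_mk_left _ _⟩) (hnegb hy)
      by_cases hva' : v = a'
      · subst hva'
        refine ⟨s(v, b'), ⟨Finset.mem_insert_of_mem (Finset.mem_insert_self _ _),
          Sym2.mem_mk_left _ _⟩, ?_⟩
        rintro y ⟨hy, hvy⟩
        rcases Finset.mem_insert.1 hy with rfl | hy
        · rcases Sym2.mem_iff.1 hvy with h | h
          · exact absurd h.symm haa'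
          · exact absurd h ha'b
        rcases Finset.mem_insert.1 hy with rfl | hy
        · rfl
        · exact absurd ((hA.2 v).unique ⟨hsubA hy, hvy⟩
            ⟨hgaA, Sym2.mem_mk_right _ _⟩) (hnega hy)
      by_cases hvb' : v = b'
      · subst hvb'
        refine ⟨s(a', v), ⟨Finset.mem_insert_of_mem (Finset.mem_insert_self _ _),
          Sym2.mem_mk_right _ _⟩, ?_⟩
        rintro y ⟨hy, hvy⟩
        rcases Finset.mem_insert.1 hy with rfl | hy
        · rcases Sym2.mem_iff.1 hvy with h | h
          · exact absurd h.symm hab'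
          · exact absurd h.symm hbb'
        rcases Finset.mem_insert.1 hy with rfl | hy
        · rfl
        · exact absurd ((hA.2 v).unique ⟨hsubA hy, hvy⟩
            ⟨hgbA, Sym2.mem_mk_right _ _⟩) (hnegb hy)
      · obtain ⟨f₀, ⟨hf₀A, hf₀v⟩, huniq⟩ := hA.2 v
        have hf₀ga : f₀ ≠ s(a, a') := by
          rintro rfl
          rcases Sym2.mem_iff.1 hf₀v with h | h
          · exact hva h
          · exact hva' h
        have hf₀gb : f₀ ≠ s(b, b') := by
          rintro rfl
          rcases Sym2.mem_iff.1 hf₀v with h | h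
          · exact hvb h
          · exact hvb' h
        refine ⟨f₀, ⟨Finset.mem_insert_of_mem (Finset.mem_insert_of_mem
          (Finset.mem_erase.2 ⟨hf₀gb, Finset.mem_erase.2 ⟨hf₀ga, hf₀A⟩⟩)), hf₀v⟩, ?_⟩
        rintro y ⟨hy, hvy⟩
        rcases Finset.mem_insert.1 hy with rfl | hy
        · rcases Sym2.mem_iff.1 hvy with h | h
          · exact absurd h hva
          · exact absurd h hvb
        rcases Finset.mem_insert.1 hy with rfl | hy
        · rcases Sym2.mem_iff.1 hvy with h | h
          · exact absurd h hva'
          · exact absurd h hvb'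
        · exact huniq y ⟨hsubA hy, hvy⟩
  apply no_cover hG A' B C hA'PM hB hC
  intro e he
  by_cases h1 : e = s(a, b)
  · subst h1; exact Or.inl (Finset.mem_insert_self _ _)
  by_cases h2 : e = s(a', b')
  · subst h2; exact Or.inl (Finset.mem_insert_of_mem (Finset.mem_insert_self _ _))
  rcases hcov e he h1 h2 with hea | heb | hec
  · by_cases hga : e = s(a, a')
    · subst hga
      rcases hgaBC with h | h
      · exact Or.inr (Or.inl h)
      · exact Or.inr (Or.inr h)
    by_cases hgb : e = s(b, b')
    · subst hgb
      rcases hgbBC with h | h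
      · exact Or.inr (Or.inl h)
      · exact Or.inr (Or.inr h)
    · exact Or.inl (Finset.mem_insert_of_mem (Finset.mem_insert_of_mem
        (Finset.mem_erase.2 ⟨hgb, Finset.mem_erase.2 ⟨hga, hea⟩⟩)))
  · exact Or.inr (Or.inl heb)
  · exact Or.inr (Or.inr hec)

end SnarkAux

theorem snark_at_least_three_uncovered {V : Type*} [Fintype V] [DecidableEq V]
    (G : SimpleGraph V) [DecidableRel G.Adj] (hG : G.IsSnark)
    (M₁ M₂ M₃ : Finset (Sym2 V)) (h₁ : G.IsPM M₁) (h₂ : G.IsPM M₂) (h₃ : G.IsPM M₃) :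
    3 ≤ (G.edgeFinset.filter (fun e => e ∉ M₁ ∧ e ∉ M₂ ∧ e ∉ M₃)).card := by
  classical
  by_contra hcon
  push_neg at hcon
  set U := G.edgeFinset.filter (fun e => e ∉ M₁ ∧ e ∉ M₂ ∧ e ∉ M₃) with hUdef
  have hUcard : U.card ≤ 2 := by omega
  have hmemU : ∀ {e : Sym2 V}, e ∈ G.edgeFinset →
      (SnarkAux.mult M₁ M₂ M₃ e = 0 ↔ e ∈ U) := by
    intro e he
    rw [hUdef, Finset.mem_filter, SnarkAux.mult_eq_zero_iff]
    tauto
  have hthree : ∀ x y z : Sym2 V, x ≠ y → x ≠ z → y ≠ z →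
      x ∈ U → y ∈ U → z ∈ U → False := by
    intro x y z hxy hxz hyz hx hy hz
    have hsub : ({x, y, z} : Finset (Sym2 V)) ⊆ U := by
      intro t ht
      simp only [Finset.mem_insert, Finset.mem_singleton] at ht
      rcases ht with rfl | rfl | rfl <;> assumption
    have hc3 : ({x, y, z} : Finset (Sym2 V)).card = 3 := by
      rw [Finset.card_insert_of_notMem (by simp [hxy, hxz]),
        Finset.card_insert_of_notMem (by simp [hyz]), Finset.card_singleton]
    have := Finset.card_le_card hsub
    omega
  -- no edge lies in all three matchings
  have h3 : ∀ e ∈ G.edgeFinset, SnarkAux.mult M₁ M₂ M₃ e ≠ 3 := by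
    intro e he hm3
    obtain ⟨u, w, huw, rfl⟩ := SnarkAux.endpoints (SimpleGraph.mem_edgeFinset.1 he)
    obtain ⟨f, g, hef, heg, hfg, hfE, hvf, hgE, hvg, hsum, -⟩ :=
      SnarkAux.local3 hG.1 h₁ h₂ h₃ he (Sym2.mem_mk_left u w)
    obtain ⟨f', g', hef', heg', hfg', hfE', hvf', hgE', hvg', hsum', -⟩ :=
      SnarkAux.local3 hG.1 h₁ h₂ h₃ he (Sym2.mem_mk_right u w)
    have hf0 : SnarkAux.mult M₁ M₂ M₃ f = 0 := by omega
    have hg0 : SnarkAux.mult M₁ M₂ M₃ g = 0 := by omega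
    have hf'0 : SnarkAux.mult M₁ M₂ M₃ f' = 0 := by omega
    have hff' : f ≠ f' := by
      rintro rfl
      exact hef (SnarkAux.edge_eq hvf hvf' huw).symm
    have hgf' : g ≠ f' := by
      rintro rfl
      exact heg (SnarkAux.edge_eq hvg hvf' huw).symm
    exact hthree f g f' hfg hff' hgf'
      ((hmemU hfE).1 hf0) ((hmemU hgE).1 hg0) ((hmemU hfE').1 hf'0)
  rcases Finset.eq_empty_or_nonempty U with hUe | ⟨e1, he1U⟩
  · -- every edge covered: direct contradiction
    refine SnarkAux.no_cover hG M₁ M₂ M₃ h₁ h₂ h₃ (fun e he => ?_)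
    by_contra hc
    push_neg at hc
    have : e ∈ U := by
      rw [hUdef, Finset.mem_filter]
      exact ⟨he, hc.1, hc.2.1, hc.2.2⟩
    simp [hUe] at this
  · have he1E : e1 ∈ G.edgeFinset := by
      have := he1U
      rw [hUdef, Finset.mem_filter] at this
      exact this.1
    have he1m : SnarkAux.mult M₁ M₂ M₃ e1 = 0 := by
      have := he1U
      rw [hUdef, Finset.mem_filter, ← SnarkAux.mult_eq_zero_iff (M₁ := M₁)] at this
      exact this.2
    obtain ⟨a, b, hab, rfl⟩ := SnarkAux.endpoints (SimpleGraph.mem_edgeFinset.1 he1E)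
    -- at each endpoint of e1 there is a unique edge of multiplicity 2
    have hkey : ∀ v : V, v ∈ s(a, b) → ∃ gv, gv ∈ G.edgeFinset ∧ v ∈ gv ∧
        gv ≠ s(a, b) ∧ SnarkAux.mult M₁ M₂ M₃ gv = 2 ∧
        (∀ h ∈ G.edgeFinset, v ∈ h → SnarkAux.mult M₁ M₂ M₃ h = 2 → h = gv) := by
      intro v hv
      obtain ⟨f, g, hef, heg, hfg, hfE, hvf, hgE, hvg, hsum, hcomp⟩ :=
        SnarkAux.local3 hG.1 h₁ h₂ h₃ he1E hv
      have hf3 := h3 f hfE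
      have hg3 := h3 g hgE
      have hfle := SnarkAux.mult_le_three M₁ M₂ M₃ f
      have hgle := SnarkAux.mult_le_three M₁ M₂ M₃ g
      have hdisj : (SnarkAux.mult M₁ M₂ M₃ f = 2 ∧ SnarkAux.mult M₁ M₂ M₃ g = 1) ∨
          (SnarkAux.mult M₁ M₂ M₃ f = 1 ∧ SnarkAux.mult M₁ M₂ M₃ g = 2) := by omega
      rcases hdisj with ⟨hf2, hg1⟩ | ⟨hf1, hg2⟩
      · refine ⟨f, hfE, hvf, hef.symm, hf2, fun h hhE hhv hh2 => ?_⟩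
        rcases hcomp h hhE hhv with rfl | rfl | rfl
        · omega
        · rfl
        · omega
      · refine ⟨g, hgE, hvg, heg.symm, hg2, fun h hhE hhv hh2 => ?_⟩
        rcases hcomp h hhE hhv with rfl | rfl | rfl
        · omega
        · omega
        · rfl
    obtain ⟨ga, hgaE, haga, hgane, hga2, -⟩ := hkey a (Sym2.mem_mk_left a b)
    obtain ⟨gb, hgbE, hbgb, hgbne, hgb2, -⟩ := hkey b (Sym2.mem_mk_right a b)
    have hbga : b ∉ ga := fun hb => hgane (SnarkAux.edge_eq haga hb hab)
    have hagb : a ∉ gb := fun ha => hgbne (SnarkAux.edge_eq ha hbgb hab)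
    obtain ⟨a', haa', rfl⟩ :=
      SnarkAux.other_endpoint (SimpleGraph.mem_edgeFinset.1 hgaE) haga
    obtain ⟨b', hbb', rfl⟩ :=
      SnarkAux.other_endpoint (SimpleGraph.mem_edgeFinset.1 hgbE) hbgb
    have ha'b : a' ≠ b := by
      intro h
      exact hbga (by rw [← h]; exact Sym2.mem_mk_right a a')
    have hab' : a ≠ b' := by
      intro h
      exact hagb (by rw [h]; exact Sym2.mem_mk_right b b')
    -- second uncovered edge at a'
    obtain ⟨f, g, hef, heg, hfg, hfE, hvf, hgE, hvg, hsum, hcompa'⟩ :=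
      SnarkAux.local3 hG.1 h₁ h₂ h₃ hgaE (Sym2.mem_mk_right a a')
    obtain ⟨e2, he2E, ha'e2, he2m, he2nega⟩ : ∃ e2, e2 ∈ G.edgeFinset ∧ a' ∈ e2 ∧
        SnarkAux.mult M₁ M₂ M₃ e2 = 0 ∧ e2 ≠ s(a, a') := by
      rcases (by omega : SnarkAux.mult M₁ M₂ M₃ f = 0 ∨
          SnarkAux.mult M₁ M₂ M₃ g = 0) with h0 | h0
      · exact ⟨f, hfE, hvf, h0, hef.symm⟩
      · exact ⟨g, hgE, hvg, h0, heg.symm⟩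
    have he2U : e2 ∈ U := (hmemU he2E).1 he2m
    have he2ne1 : e2 ≠ s(a, b) := by
      rintro rfl
      rcases Sym2.mem_iff.1 ha'e2 with h | h
      · exact haa' h.symm
      · exact ha'b h
    have hUchar : ∀ x ∈ U, x = s(a, b) ∨ x = e2 := by
      intro x hx
      by_contra hc
      push_neg at hc
      exact hthree x (s(a, b)) e2 hc.1 hc.2 he2ne1.symm hx he1U he2U
    -- second uncovered edge at b' coincides with e2
    obtain ⟨f', g', hef', heg', hfg', hfE', hvf', hgE', hvg', hsum', hcompb'⟩ :=
      SnarkAux.local3 hG.1 h₁ h₂ h₃ hgbE (Sym2.mem_mk_right b b')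
    obtain ⟨e2', he2E', hb'e2', he2m', he2negb⟩ : ∃ e2', e2' ∈ G.edgeFinset ∧ b' ∈ e2' ∧
        SnarkAux.mult M₁ M₂ M₃ e2' = 0 ∧ e2' ≠ s(b, b') := by
      rcases (by omega : SnarkAux.mult M₁ M₂ M₃ f' = 0 ∨
          SnarkAux.mult M₁ M₂ M₃ g' = 0) with h0 | h0
      · exact ⟨f', hfE', hvf', h0, hef'.symm⟩
      · exact ⟨g', hgE', hvg', h0, heg'.symm⟩
    have he2'U : e2' ∈ U := (hmemU he2E').1 he2m'
    have he2'ne1 : e2' ≠ s(a, b) := by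
      rintro rfl
      rcases Sym2.mem_iff.1 hb'e2' with h | h
      · exact hab' h.symm
      · exact hbb' h.symm
    have he2'eq : e2' = e2 := (hUchar e2' he2'U).resolve_left he2'ne1
    rw [he2'eq] at hb'e2'
    have ha'b' : a' ≠ b' := by
      intro h
      have ha'gb : a' ∈ s(b, b') := by rw [h]; exact Sym2.mem_mk_right b b'
      rcases hcompa' s(b, b') hgbE ha'gb with h' | h' | h'
      · exact hagb (by rw [h']; exact Sym2.mem_mk_left a a')
      · rw [h'] at hgb2; omega
      · rw [h'] at hgb2; omega
    have he2eq : e2 = s(a', b') := SnarkAux.edge_eq ha'e2 hb'e2' ha'b'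
    subst he2eq
    have hC1 : ∀ e ∈ G.edgeFinset, e ≠ s(a, b) → e ≠ s(a', b') →
        e ∈ M₁ ∨ e ∈ M₂ ∨ e ∈ M₃ := by
      intro e he hne1 hne2
      by_contra hc
      push_neg at hc
      have heU : e ∈ U := by
        rw [hUdef, Finset.mem_filter]
        exact ⟨he, hc.1, hc.2.1, hc.2.2⟩
      rcases hUchar e heU with h | h
      · exact hne1 h
      · exact hne2 h
    have hC2 : ∀ e ∈ G.edgeFinset, e ≠ s(a, b) → e ≠ s(a', b') →
        e ∈ M₂ ∨ e ∈ M₁ ∨ e ∈ M₃ := by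
      intro e he p q
      rcases hC1 e he p q with h | h | h
      · exact Or.inr (Or.inl h)
      · exact Or.inl h
      · exact Or.inr (Or.inr h)
    have hC3 : ∀ e ∈ G.edgeFinset, e ≠ s(a, b) → e ≠ s(a', b') →
        e ∈ M₃ ∨ e ∈ M₁ ∨ e ∈ M₂ := by
      intro e he p q
      rcases hC1 e he p q with h | h | h
      · exact Or.inr (Or.inl h)
      · exact Or.inr (Or.inr h)
      · exact Or.inl h
    rcases SnarkAux.mult_eq_two_cases hga2 with ⟨ha1, ha2, ha3⟩ | ⟨ha1, ha2, ha3⟩ |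
        ⟨ha1, ha2, ha3⟩ <;>
      rcases SnarkAux.mult_eq_two_cases hgb2 with ⟨hb1, hb2, hb3⟩ | ⟨hb1, hb2, hb3⟩ |
        ⟨hb1, hb2, hb3⟩
    · exact SnarkAux.swap_contra hG M₁ M₂ M₃ h₁ h₂ h₃ hab hab' ha'b ha'b' haa' hbb'
        he1E he2E ha1 hb1 (Or.inl ha2) (Or.inl hb2) hC1
    · exact SnarkAux.swap_contra hG M₁ M₂ M₃ h₁ h₂ h₃ hab hab' ha'b ha'b' haa' hbb'
        he1E he2E ha1 hb1 (Or.inl ha2) (Or.inr hb3) hC1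
    · exact SnarkAux.swap_contra hG M₂ M₁ M₃ h₂ h₁ h₃ hab hab' ha'b ha'b' haa' hbb'
        he1E he2E ha2 hb2 (Or.inl ha1) (Or.inr hb3) hC2
    · exact SnarkAux.swap_contra hG M₁ M₂ M₃ h₁ h₂ h₃ hab hab' ha'b ha'b' haa' hbb'
        he1E he2E ha1 hb1 (Or.inr ha3) (Or.inl hb2) hC1
    · exact SnarkAux.swap_contra hG M₁ M₂ M₃ h₁ h₂ h₃ hab hab' ha'b ha'b' haa' hbb'
        he1E he2E ha1 hb1 (Or.inr ha3) (Or.inr hb3) hC1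
    · exact SnarkAux.swap_contra hG M₃ M₁ M₂ h₃ h₁ h₂ hab hab' ha'b ha'b' haa' hbb'
        he1E he2E ha3 hb3 (Or.inl ha1) (Or.inr hb2) hC3
    · exact SnarkAux.swap_contra hG M₂ M₁ M₃ h₂ h₁ h₃ hab hab' ha'b ha'b' haa' hbb'
        he1E he2E ha2 hb2 (Or.inr ha3) (Or.inl hb1) hC2
    · exact SnarkAux.swap_contra hG M₃ M₁ M₂ h₃ h₁ h₂ hab hab' ha'b ha'b' haa' hbb'
        he1E he2E ha3 hb3 (Or.inr ha2) (Or.inl hb1) hC3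
    · exact SnarkAux.swap_contra hG M₂ M₁ M₃ h₂ h₁ h₃ hab hab' ha'b ha'b' haa' hbb'
        he1E he2E ha2 hb2 (Or.inr ha3) (Or.inr hb3) hC2
end

section
/- For every snark G that admits at least one regular 3-array, rdf(G) = 3 if and only if df(G) = 3. -/
open Finset

/-- The (colouring) defect: the minimum number of edges left uncovered by three
perfect matchings. -/
noncomputable def SimpleGraph.defect {V : Type*} [Fintype V] [DecidableEq V]
    (G : SimpleGraph V) [DecidableRel G.Adj] : ℕ :=
  sInf {k | ∃ M₁ M₂ M₃ : Finset (Sym2 V), G.IsPM M₁ ∧ G.IsPM M₂ ∧ G.IsPM M₃ ∧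
    (G.edgeFinset.filter (fun e => e ∉ M₁ ∧ e ∉ M₂ ∧ e ∉ M₃)).card = k}

/-- The regular defect: the minimum number of edges left uncovered by three
perfect matchings with empty intersection. -/
noncomputable def SimpleGraph.regDefect {V : Type*} [Fintype V] [DecidableEq V]
    (G : SimpleGraph V) [DecidableRel G.Adj] : ℕ :=
  sInf {k | ∃ M₁ M₂ M₃ : Finset (Sym2 V), G.IsPM M₁ ∧ G.IsPM M₂ ∧ G.IsPM M₃ ∧
    M₁ ∩ M₂ ∩ M₃ = ∅ ∧
    (G.edgeFinset.filter (fun e => e ∉ M₁ ∧ e ∉ M₂ ∧ e ∉ M₃)).card = k}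


private lemma key_regular {V : Type*} [Fintype V] [DecidableEq V] (G : SimpleGraph V)
    [DecidableRel G.Adj] (hcubic : G.IsCubic) {M₁ M₂ M₃ : Finset (Sym2 V)}
    (h1 : G.IsPM M₁) (h2 : G.IsPM M₂) (h3 : G.IsPM M₃)
    (hcard : (G.edgeFinset.filter (fun e => e ∉ M₁ ∧ e ∉ M₂ ∧ e ∉ M₃)).card ≤ 3) :
    M₁ ∩ M₂ ∩ M₃ = ∅ := by

  by_contra h
  obtain ⟨e, he⟩ := Finset.nonempty_iff_ne_empty.mpr h
  simp only [Finset.mem_inter] at he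
  obtain ⟨⟨he1, he2⟩, he3⟩ := he
  have heE : e ∈ G.edgeSet := h1.1 he1
  induction e using Sym2.ind with
  | _ u v =>
  have hadj : G.Adj u v := heE
  have hne : u ≠ v := hadj.ne
  have uncov : ∀ w : V, w ∈ (s(u, v) : Sym2 V) →
      ∀ f ∈ (G.incidenceFinset w).erase s(u, v),
      f ∈ G.edgeFinset.filter (fun e => e ∉ M₁ ∧ e ∉ M₂ ∧ e ∉ M₃) := by
    intro w hw f hf
    have hfne : f ≠ s(u, v) := (Finset.mem_erase.mp hf).1
    have hfi := (Finset.mem_erase.mp hf).2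
    rw [SimpleGraph.mem_incidenceFinset] at hfi
    obtain ⟨hfE, hwf⟩ := hfi
    rw [Finset.mem_filter]
    refine ⟨SimpleGraph.mem_edgeFinset.mpr hfE, ?_, ?_, ?_⟩
    · intro hfM
      obtain ⟨g, _, hg⟩ := h1.2 w
      exact hfne ((hg f ⟨hfM, hwf⟩).trans (hg s(u,v) ⟨he1, hw⟩).symm)
    · intro hfM
      obtain ⟨g, _, hg⟩ := h2.2 w
      exact hfne ((hg f ⟨hfM, hwf⟩).trans (hg s(u,v) ⟨he2, hw⟩).symm)
    · intro hfM
      obtain ⟨g, _, hg⟩ := h3.2 w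
      exact hfne ((hg f ⟨hfM, hwf⟩).trans (hg s(u,v) ⟨he3, hw⟩).symm)
  set U := ((G.incidenceFinset u).erase s(u, v)) ∪ ((G.incidenceFinset v).erase s(u, v)) with hU
  have hsub : U ⊆ G.edgeFinset.filter (fun e => e ∉ M₁ ∧ e ∉ M₂ ∧ e ∉ M₃) := by
    intro f hf
    rcases Finset.mem_union.mp hf with hf | hf
    · exact uncov u (Sym2.mem_mk_left u v) f hf
    · exact uncov v (Sym2.mem_mk_right u v) f hf
  have hdisj : Disjoint ((G.incidenceFinset u).erase s(u, v))
      ((G.incidenceFinset v).erase s(u, v)) := by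
    rw [Finset.disjoint_left]
    intro f hfu hfv
    have h1' := Finset.mem_erase.mp hfu
    have h2' := Finset.mem_erase.mp hfv
    exact h1'.1 ((Sym2.mem_and_mem_iff hne).mp
      ⟨((SimpleGraph.mem_incidenceFinset _ _ _).mp h1'.2).2,
       ((SimpleGraph.mem_incidenceFinset _ _ _).mp h2'.2).2⟩)
  have hmemu : s(u, v) ∈ G.incidenceFinset u :=
    (SimpleGraph.mem_incidenceFinset _ _ _).mpr ⟨heE, Sym2.mem_mk_left u v⟩
  have hmemv : s(u, v) ∈ G.incidenceFinset v :=
    (SimpleGraph.mem_incidenceFinset _ _ _).mpr ⟨heE, Sym2.mem_mk_right u v⟩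
  have hcardU : U.card = 4 := by
    rw [hU, Finset.card_union_of_disjoint hdisj, Finset.card_erase_of_mem hmemu,
      Finset.card_erase_of_mem hmemv, G.card_incidenceFinset_eq_degree,
      G.card_incidenceFinset_eq_degree, hcubic u, hcubic v]
  have := Finset.card_le_card hsub
  omega

theorem regDefect_eq_three_iff_defect_eq_three {V : Type*} [Fintype V] [DecidableEq V]
    (G : SimpleGraph V) [DecidableRel G.Adj] (hG : G.IsSnark)
    (hreg : ∃ M₁ M₂ M₃ : Finset (Sym2 V),
      G.IsPM M₁ ∧ G.IsPM M₂ ∧ G.IsPM M₃ ∧ M₁ ∩ M₂ ∩ M₃ = ∅) :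
    G.regDefect = 3 ↔ G.defect = 3 := by
  classical
  obtain ⟨N₁, N₂, N₃, hN1, hN2, hN3, hNint⟩ := hreg
  set A : Set ℕ := {k | ∃ M₁ M₂ M₃ : Finset (Sym2 V), G.IsPM M₁ ∧ G.IsPM M₂ ∧ G.IsPM M₃ ∧
    (G.edgeFinset.filter (fun e => e ∉ M₁ ∧ e ∉ M₂ ∧ e ∉ M₃)).card = k} with hA
  set B : Set ℕ := {k | ∃ M₁ M₂ M₃ : Finset (Sym2 V), G.IsPM M₁ ∧ G.IsPM M₂ ∧ G.IsPM M₃ ∧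
    M₁ ∩ M₂ ∩ M₃ = ∅ ∧
    (G.edgeFinset.filter (fun e => e ∉ M₁ ∧ e ∉ M₂ ∧ e ∉ M₃)).card = k} with hB
  have hdefA : G.defect = sInf A := rfl
  have hdefB : G.regDefect = sInf B := rfl
  have hBA : ∀ k ∈ B, k ∈ A := by
    rintro k ⟨M₁, M₂, M₃, h1, h2, h3, _, hc⟩
    exact ⟨M₁, M₂, M₃, h1, h2, h3, hc⟩
  have hAB : ∀ k ∈ A, k ≤ 3 → k ∈ B := by
    rintro k ⟨M₁, M₂, M₃, h1, h2, h3, hc⟩ hk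
    exact ⟨M₁, M₂, M₃, h1, h2, h3, key_regular G hG.1 h1 h2 h3 (hc ▸ hk), hc⟩
  have hBne : B.Nonempty :=
    ⟨_, N₁, N₂, N₃, hN1, hN2, hN3, hNint, rfl⟩
  have hAne : A.Nonempty := ⟨_, hBA _ hBne.choose_spec⟩
  rw [hdefA, hdefB]
  constructor
  · intro h
    have h3B : (3 : ℕ) ∈ B := h ▸ Nat.sInf_mem hBne
    have hle : sInf A ≤ 3 := Nat.sInf_le (hBA _ h3B)
    rcases eq_or_lt_of_le hle with heq | hlt
    · exact heq
    · exfalso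
      have hmem : sInf A ∈ A := Nat.sInf_mem hAne
      have : sInf A ∈ B := hAB _ hmem (le_of_lt hlt)
      have := Nat.sInf_le this
      omega
  · intro h
    have h3A : (3 : ℕ) ∈ A := h ▸ Nat.sInf_mem hAne
    have hle : sInf B ≤ 3 := Nat.sInf_le (hAB _ h3A le_rfl)
    rcases eq_or_lt_of_le hle with heq | hlt
    · exact heq
    · exfalso
      have hmem : sInf B ∈ B := Nat.sInf_mem hBne
      have := Nat.sInf_le (hBA _ hmem)
      omega
end

section
/- Let G be a snark admitting a regular 3-array. Then rdf(G) ≥ g/2, where g is the girth of G. -/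
open Finset

section RDFAux

namespace RDF

variable {V : Type*} [Fintype V] [DecidableEq V]

/-- coverage of an edge by three matchings -/
def cov (M₁ M₂ M₃ : Finset (Sym2 V)) (e : Sym2 V) : ℕ :=
  (if e ∈ M₁ then 1 else 0) + (if e ∈ M₂ then 1 else 0) + (if e ∈ M₃ then 1 else 0)

omit [Fintype V] in
lemma cov_le_two {M₁ M₂ M₃ : Finset (Sym2 V)} (hI : M₁ ∩ M₂ ∩ M₃ = ∅) (e : Sym2 V) :
    cov M₁ M₂ M₃ e ≤ 2 := by
  by_cases h1 : e ∈ M₁ <;> by_cases h2 : e ∈ M₂ <;> by_cases h3 : e ∈ M₃ <;>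
      simp only [cov, h1, h2, h3, if_true, if_false]
  · exfalso
    have hm : e ∈ M₁ ∩ M₂ ∩ M₃ := by simp [Finset.mem_inter, h1, h2, h3]
    rw [hI] at hm
    exact Finset.notMem_empty e hm
  all_goals omega

omit [Fintype V] in
lemma cov_eq_zero {M₁ M₂ M₃ : Finset (Sym2 V)} {e : Sym2 V}
    (h1 : e ∉ M₁) (h2 : e ∉ M₂) (h3 : e ∉ M₃) : cov M₁ M₂ M₃ e = 0 := by
  simp [cov, h1, h2, h3]

omit [Fintype V] in
lemma not_mem_of_cov_eq_zero {M₁ M₂ M₃ : Finset (Sym2 V)} {e : Sym2 V}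
    (h : cov M₁ M₂ M₃ e = 0) : e ∉ M₁ ∧ e ∉ M₂ ∧ e ∉ M₃ := by
  by_cases h1 : e ∈ M₁ <;> by_cases h2 : e ∈ M₂ <;> by_cases h3 : e ∈ M₃ <;>
      simp only [cov, h1, h2, h3, if_true, if_false] at h <;>
    first
      | exact ⟨h1, h2, h3⟩
      | omega

variable (G : SimpleGraph V) [DecidableRel G.Adj]

lemma matching_filter_card {M : Finset (Sym2 V)} (hM : G.IsPM M) (y : V) :
    ((G.neighborFinset y).filter (fun z => s(y, z) ∈ M)).card = 1 := by
  obtain ⟨e, ⟨heM, hye⟩, huniq⟩ := hM.2 y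
  have heS : e ∈ G.edgeSet := hM.1 heM
  obtain ⟨z, hz, rfl⟩ : ∃ z, G.Adj y z ∧ e = s(y, z) := by
    induction e with
    | h u w =>
      rcases Sym2.mem_iff.mp hye with rfl | rfl
      · exact ⟨w, G.mem_edgeSet.mp heS, rfl⟩
      · exact ⟨u, (G.mem_edgeSet.mp heS).symm, Sym2.eq_swap.symm⟩
  rw [Finset.card_eq_one]
  refine ⟨z, Finset.ext fun w => ?_⟩
  simp only [Finset.mem_filter, SimpleGraph.mem_neighborFinset, Finset.mem_singleton]
  constructor
  · rintro ⟨hadj, hmem⟩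
    have := huniq s(y, w) ⟨hmem, Sym2.mem_mk_left y w⟩
    exact Sym2.congr_right.mp this
  · rintro rfl
    exact ⟨hz, heM⟩

lemma sum_cov_nbr {M₁ M₂ M₃ : Finset (Sym2 V)} (hcub : G.IsCubic)
    (h1 : G.IsPM M₁) (h2 : G.IsPM M₂) (h3 : G.IsPM M₃) (y : V) :
    ∑ z ∈ G.neighborFinset y, cov M₁ M₂ M₃ s(y, z) = 3 := by
  unfold cov
  rw [Finset.sum_add_distrib, Finset.sum_add_distrib]
  have e1 := matching_filter_card G h1 y
  have e2 := matching_filter_card G h2 y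
  have e3 := matching_filter_card G h3 y
  rw [Finset.sum_boole, Finset.sum_boole, Finset.sum_boole]
  push_cast
  rw [e1, e2, e3]

/-- Structure around a vertex `y` with an incident edge of coverage ≠ 1. -/
lemma vertex_struct {M₁ M₂ M₃ : Finset (Sym2 V)} (hcub : G.IsCubic)
    (h1 : G.IsPM M₁) (h2 : G.IsPM M₂) (h3 : G.IsPM M₃) (hI : M₁ ∩ M₂ ∩ M₃ = ∅)
    {y x : V} (hx : G.Adj y x) (hcx : cov M₁ M₂ M₃ s(y, x) ≠ 1) :
    (∃ z, G.Adj y z ∧ z ≠ x ∧ cov M₁ M₂ M₃ s(y, z) ≠ 1) ∧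
    (∀ z z', G.Adj y z → z ≠ x → cov M₁ M₂ M₃ s(y, z) ≠ 1 →
      G.Adj y z' → z' ≠ x → cov M₁ M₂ M₃ s(y, z') ≠ 1 → z = z') ∧
    (∀ z, G.Adj y z → z ≠ x → cov M₁ M₂ M₃ s(y, z) ≠ 1 →
      cov M₁ M₂ M₃ s(y, x) + cov M₁ M₂ M₃ s(y, z) = 2) := by
  have hxN : x ∈ G.neighborFinset y := (SimpleGraph.mem_neighborFinset G y x).mpr hx
  have hcard : (G.neighborFinset y).card = 3 := hcub y
  obtain ⟨u, w, huw, hErase⟩ := Finset.card_eq_two.mp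
    (by rw [Finset.card_erase_of_mem hxN, hcard] : ((G.neighborFinset y).erase x).card = 2)
  have hxu : x ≠ u := fun h =>
    (Finset.mem_erase.mp (hErase ▸ Finset.mem_insert_self u {w})).1 h.symm
  have hxw : x ≠ w := fun h =>
    (Finset.mem_erase.mp (hErase ▸ (by simp : w ∈ ({u, w} : Finset V)))).1 h.symm
  have hNeq : G.neighborFinset y = insert x {u, w} := by
    rw [← hErase, Finset.insert_erase hxN]
  have hsum := sum_cov_nbr G hcub h1 h2 h3 y
  rw [hNeq, Finset.sum_insert (by simp [hxu, hxw]), Finset.sum_pair huw] at hsum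
  have bu := cov_le_two hI s(y, u)
  have bw := cov_le_two hI s(y, w)
  have bx := cov_le_two hI s(y, x)
  have hmem : ∀ z : V, G.Adj y z → z ≠ x → z = u ∨ z = w := by
    intro z hz hzx
    have : z ∈ (G.neighborFinset y).erase x :=
      Finset.mem_erase.mpr ⟨hzx, (SimpleGraph.mem_neighborFinset G y z).mpr hz⟩
    rw [hErase] at this
    simpa using this
  have hadju : G.Adj y u := (SimpleGraph.mem_neighborFinset G y u).mp (hNeq ▸ (by simp))
  have hadjw : G.Adj y w := (SimpleGraph.mem_neighborFinset G y w).mp (hNeq ▸ (by simp))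
  refine ⟨?_, ?_, ?_⟩
  · by_cases hcu : cov M₁ M₂ M₃ s(y, u) = 1
    · exact ⟨w, hadjw, fun h => hxw h.symm, by omega⟩
    · exact ⟨u, hadju, fun h => hxu h.symm, hcu⟩
  · intro z z' hz hzx hcz hz' hz'x hcz'
    rcases hmem z hz hzx with rfl | rfl <;> rcases hmem z' hz' hz'x with rfl | rfl <;>
      first | rfl | omega
  · intro z hz hzx hcz
    rcases hmem z hz hzx with rfl | rfl <;> omega

end RDF

namespace RDF

variable {V : Type*} [Fintype V] [DecidableEq V]
variable (G : SimpleGraph V) [DecidableRel G.Adj] (M₁ M₂ M₃ : Finset (Sym2 V))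

/-- The subgraph of edges covered 0 or 2 times. -/
def auxH : SimpleGraph V where
  Adj x y := G.Adj x y ∧ cov M₁ M₂ M₃ s(x, y) ≠ 1
  symm := by
    constructor
    intro x y ⟨h, hc⟩
    exact ⟨h.symm, by rwa [Sym2.eq_swap] at hc⟩
  loopless := ⟨fun x h => G.loopless.irrefl x h.1⟩

lemma auxH_le : auxH G M₁ M₂ M₃ ≤ G := fun _ _ h => h.1

variable {G M₁ M₂ M₃}

/-- The type of darts of `auxH`, as a subtype of pairs. -/
abbrev DD (G : SimpleGraph V) (M₁ M₂ M₃ : Finset (Sym2 V)) [DecidableRel G.Adj] :=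
  {d : V × V // (auxH G M₁ M₂ M₃).Adj d.1 d.2}

/-- Reversal of a dart. -/
def auxR (d : DD G M₁ M₂ M₃) : DD G M₁ M₂ M₃ := ⟨(d.1.2, d.1.1), d.2.symm⟩

lemma auxR_auxR (d : DD G M₁ M₂ M₃) : auxR (auxR d) = d := by
  cases d; rfl

variable (hcub : G.IsCubic) (h1 : G.IsPM M₁) (h2 : G.IsPM M₂) (h3 : G.IsPM M₃)
  (hI : M₁ ∩ M₂ ∩ M₃ = ∅)

include hcub h1 h2 h3 hI

lemma other_exists {x y : V} (h : (auxH G M₁ M₂ M₃).Adj x y) :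
    ∃ z, (auxH G M₁ M₂ M₃).Adj y z ∧ z ≠ x := by
  obtain ⟨z, hz, hzx, hcz⟩ := (vertex_struct G hcub h1 h2 h3 hI h.symm.1 h.symm.2).1
  exact ⟨z, ⟨hz, hcz⟩, hzx⟩

lemma other_unique {x y z z' : V} (h : (auxH G M₁ M₂ M₃).Adj y x)
    (hz : (auxH G M₁ M₂ M₃).Adj y z) (hzx : z ≠ x)
    (hz' : (auxH G M₁ M₂ M₃).Adj y z') (hz'x : z' ≠ x) : z = z' :=
  (vertex_struct G hcub h1 h2 h3 hI h.1 h.2).2.1 z z' hz.1 hzx hz.2 hz'.1 hz'x hz'.2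

lemma other_sum {x y z : V} (h : (auxH G M₁ M₂ M₃).Adj y x)
    (hz : (auxH G M₁ M₂ M₃).Adj y z) (hzx : z ≠ x) :
    cov M₁ M₂ M₃ s(y, x) + cov M₁ M₂ M₃ s(y, z) = 2 :=
  (vertex_struct G hcub h1 h2 h3 hI h.1 h.2).2.2 z hz.1 hzx hz.2

/-- The non-backtracking successor function on darts of `auxH`. -/
noncomputable def auxF (d : DD G M₁ M₂ M₃) : DD G M₁ M₂ M₃ :=
  ⟨(d.1.2, Classical.choose (other_exists hcub h1 h2 h3 hI d.2)),
    (Classical.choose_spec (other_exists hcub h1 h2 h3 hI d.2)).1⟩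

lemma auxF_fst (d : DD G M₁ M₂ M₃) : (auxF hcub h1 h2 h3 hI d).1.1 = d.1.2 := rfl

lemma auxF_ne (d : DD G M₁ M₂ M₃) : (auxF hcub h1 h2 h3 hI d).1.2 ≠ d.1.1 :=
  (Classical.choose_spec (other_exists hcub h1 h2 h3 hI d.2)).2

lemma auxF_eq_of (d : DD G M₁ M₂ M₃) {z : V} (hz : (auxH G M₁ M₂ M₃).Adj d.1.2 z)
    (hzx : z ≠ d.1.1) : (auxF hcub h1 h2 h3 hI d).1.2 = z :=
  other_unique hcub h1 h2 h3 hI d.2.symm (auxF hcub h1 h2 h3 hI d).2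
    (auxF_ne hcub h1 h2 h3 hI d) hz hzx

lemma auxF_auxR_auxF (d : DD G M₁ M₂ M₃) :
    auxF hcub h1 h2 h3 hI (auxR (auxF hcub h1 h2 h3 hI d)) = auxR d := by
  apply Subtype.ext
  apply Prod.ext
  · rfl
  · exact auxF_eq_of hcub h1 h2 h3 hI (auxR (auxF hcub h1 h2 h3 hI d)) d.2.symm
      (fun hcon => auxF_ne hcub h1 h2 h3 hI d hcon.symm)

lemma auxF_injective : Function.Injective (auxF hcub h1 h2 h3 hI) := by
  intro d d' h
  have := congrArg (fun x => auxR (auxF hcub h1 h2 h3 hI (auxR x))) h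
  simpa only [auxF_auxR_auxF, auxR_auxR] using this

lemma auxF_no_rev : ∀ (i : ℕ) (d : DD G M₁ M₂ M₃),
    (auxF hcub h1 h2 h3 hI)^[i] d ≠ auxR d := by
  intro i
  induction i using Nat.strong_induction_on with
  | _ i ih =>
    match i with
    | 0 =>
      intro d h
      simp only [Function.iterate_zero, id] at h
      exact (auxH G M₁ M₂ M₃).ne_of_adj d.2 (congrArg (fun x => x.1.2) h).symm
    | 1 =>
      intro d h
      simp only [Function.iterate_one] at h
      exact auxF_ne hcub h1 h2 h3 hI d (congrArg (fun x => x.1.2) h)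
    | (k + 2) =>
      intro d h
      refine ih k (by omega) (auxF hcub h1 h2 h3 hI d) ?_
      apply auxF_injective hcub h1 h2 h3 hI
      calc auxF hcub h1 h2 h3 hI ((auxF hcub h1 h2 h3 hI)^[k] (auxF hcub h1 h2 h3 hI d))
          = (auxF hcub h1 h2 h3 hI)^[k+1] (auxF hcub h1 h2 h3 hI d) :=
            (Function.iterate_succ_apply' _ k _).symm
        _ = (auxF hcub h1 h2 h3 hI)^[k+2] d :=
            (Function.iterate_succ_apply _ (k+1) d).symm
        _ = auxR d := h
        _ = auxF hcub h1 h2 h3 hI (auxR (auxF hcub h1 h2 h3 hI d)) :=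
            (auxF_auxR_auxF hcub h1 h2 h3 hI d).symm

lemma auxF_period (d : DD G M₁ M₂ M₃) :
    ∃ p, 0 < p ∧ (auxF hcub h1 h2 h3 hI)^[p] d = d := by
  obtain ⟨m, n, hmn, h⟩ :=
    Finite.exists_ne_map_eq_of_infinite (fun n : ℕ => (auxF hcub h1 h2 h3 hI)^[n] d)
  rcases hmn.lt_or_gt with hlt | hlt
  · refine ⟨n - m, by omega, ?_⟩
    have : (auxF hcub h1 h2 h3 hI)^[m] ((auxF hcub h1 h2 h3 hI)^[n - m] d)
        = (auxF hcub h1 h2 h3 hI)^[m] d := by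
      rw [← Function.iterate_add_apply]
      have : m + (n - m) = n := by omega
      rw [this]
      exact h.symm
    exact (auxF_injective hcub h1 h2 h3 hI).iterate m this
  · refine ⟨m - n, by omega, ?_⟩
    have : (auxF hcub h1 h2 h3 hI)^[n] ((auxF hcub h1 h2 h3 hI)^[m - n] d)
        = (auxF hcub h1 h2 h3 hI)^[n] d := by
      rw [← Function.iterate_add_apply]
      have : n + (m - n) = m := by omega
      rw [this]
      exact h
    exact (auxF_injective hcub h1 h2 h3 hI).iterate n this


/-- Map a dart of `auxH` to an uncovered edge: itself if uncovered, otherwise the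
uncovered edge following it. -/
noncomputable def phi (d : (auxH G M₁ M₂ M₃).Dart) : Sym2 V :=
  if cov M₁ M₂ M₃ d.edge = 0 then d.edge
  else s(d.toProd.2, Classical.choose (other_exists hcub h1 h2 h3 hI d.adj))

lemma phi_mem_U (d : (auxH G M₁ M₂ M₃).Dart) :
    phi hcub h1 h2 h3 hI d ∈
      G.edgeFinset.filter (fun e => e ∉ M₁ ∧ e ∉ M₂ ∧ e ∉ M₃) := by
  have hedge : d.edge = s(d.toProd.1, d.toProd.2) := rfl
  unfold phi
  split_ifs with hc
  · rw [Finset.mem_filter]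
    exact ⟨SimpleGraph.mem_edgeFinset.mpr
      (SimpleGraph.edgeSet_mono (auxH_le G M₁ M₂ M₃) d.edge_mem),
      not_mem_of_cov_eq_zero hc⟩
  · obtain ⟨hz, hzx⟩ := Classical.choose_spec (other_exists hcub h1 h2 h3 hI d.adj)
    set z := Classical.choose (other_exists hcub h1 h2 h3 hI d.adj)
    have hsum := other_sum hcub h1 h2 h3 hI d.adj.symm hz hzx
    have hswap : s(d.toProd.2, d.toProd.1) = d.edge := by rw [hedge, Sym2.eq_swap]
    rw [hswap] at hsum
    have hne1 : cov M₁ M₂ M₃ d.edge ≠ 1 := by rw [hedge]; exact d.adj.2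
    have hle : cov M₁ M₂ M₃ d.edge ≤ 2 := cov_le_two hI _
    have hz0 : cov M₁ M₂ M₃ s(d.toProd.2, z) = 0 := by omega
    rw [Finset.mem_filter]
    exact ⟨SimpleGraph.mem_edgeFinset.mpr ((G.mem_edgeSet).mpr hz.1),
      not_mem_of_cov_eq_zero hz0⟩

lemma snd_mem_phi (d : (auxH G M₁ M₂ M₃).Dart) :
    d.toProd.2 ∈ phi hcub h1 h2 h3 hI d := by
  unfold phi
  split_ifs with hc
  · exact Sym2.mem_mk_right _ _
  · exact Sym2.mem_mk_left _ _

omit hcub h1 h2 h3 hI in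
lemma card_mem_sym2_le_two (e : Sym2 V) :
    (Finset.univ.filter (fun v : V => v ∈ e)).card ≤ 2 := by
  induction e with
  | h a b =>
    refine le_trans (Finset.card_le_card ?_) (le_trans (Finset.card_insert_le a {b}) (by simp))
    intro v hv
    rw [Finset.mem_filter, Sym2.mem_iff] at hv
    rcases hv.2 with rfl | rfl <;> simp

lemma cycle_count {u : V} (w : (auxH G M₁ M₂ M₃).Walk u u) (hw : w.IsCycle) :
    w.length ≤ 2 * (G.edgeFinset.filter (fun e => e ∉ M₁ ∧ e ∉ M₂ ∧ e ∉ M₃)).card := by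
  classical
  have hmapnodup : (w.darts.map (fun x => x.toProd.2)).Nodup := by
    rw [SimpleGraph.Walk.map_snd_darts]
    exact hw.support_nodup
  have hsnd_inj := List.inj_on_of_nodup_map hmapnodup
  have hdnodup : w.darts.Nodup := hmapnodup.of_map
  have hlen : w.darts.toFinset.card = w.length := by
    rw [List.toFinset_card_of_nodup hdnodup, SimpleGraph.Walk.length_darts]
  have hfiber : ∀ e ∈ w.darts.toFinset.image (phi hcub h1 h2 h3 hI),
      (w.darts.toFinset.filter (fun d => phi hcub h1 h2 h3 hI d = e)).card ≤ 2 := by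
    intro e _
    refine le_trans (Finset.card_le_card_of_injOn (fun d => d.toProd.2) ?_ ?_)
      (card_mem_sym2_le_two e)
    · intro d hd
      rw [Finset.mem_coe, Finset.mem_filter] at hd
      rw [Finset.mem_coe, Finset.mem_filter]
      exact ⟨Finset.mem_univ _, hd.2 ▸ snd_mem_phi hcub h1 h2 h3 hI d⟩
    · intro d hd d' hd' hsnd
      rw [Finset.coe_filter, Set.mem_setOf_eq] at hd hd'
      exact hsnd_inj (List.mem_toFinset.mp hd.1) (List.mem_toFinset.mp hd'.1) hsnd
  calc w.length = w.darts.toFinset.card := hlen.symm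
    _ ≤ 2 * (w.darts.toFinset.image (phi hcub h1 h2 h3 hI)).card :=
        Finset.card_le_mul_card_image _ 2 hfiber
    _ ≤ 2 * (G.edgeFinset.filter (fun e => e ∉ M₁ ∧ e ∉ M₂ ∧ e ∉ M₃)).card := by
        refine Nat.mul_le_mul_left 2 (Finset.card_le_card ?_)
        rw [Finset.image_subset_iff]
        exact fun d _ => phi_mem_U hcub h1 h2 h3 hI d


lemma cov_cases {e : Sym2 V} (h : cov M₁ M₂ M₃ e = 1) :
    (e ∈ M₁ ∧ e ∉ M₂ ∧ e ∉ M₃) ∨ (e ∉ M₁ ∧ e ∈ M₂ ∧ e ∉ M₃) ∨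
    (e ∉ M₁ ∧ e ∉ M₂ ∧ e ∈ M₃) := by
  clear hcub h1 h2 h3 hI
  by_cases a1 : e ∈ M₁ <;> by_cases a2 : e ∈ M₂ <;> by_cases a3 : e ∈ M₃ <;>
      simp only [cov, a1, a2, a3, if_true, if_false] at h <;> first | omega | tauto

lemma exists_colouring
    (hU : G.edgeFinset.filter (fun e => e ∉ M₁ ∧ e ∉ M₂ ∧ e ∉ M₃) = ∅) :
    ∃ σ : Sym2 V → ZMod 2 × ZMod 2, G.IsProper3EdgeColouring σ := by
  classical
  have h0 : ∀ f ∈ G.edgeSet, cov M₁ M₂ M₃ f ≠ 0 := by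
    intro f hf hc0
    have : f ∈ G.edgeFinset.filter (fun e => e ∉ M₁ ∧ e ∉ M₂ ∧ e ∉ M₃) :=
      Finset.mem_filter.mpr ⟨SimpleGraph.mem_edgeFinset.mpr hf, not_mem_of_cov_eq_zero hc0⟩
    rw [hU] at this
    exact Finset.notMem_empty f this
  have hcov1 : ∀ e ∈ G.edgeSet, cov M₁ M₂ M₃ e = 1 := by
    intro e he
    induction e with
    | h a b =>
      by_contra hne
      have hadj : G.Adj b a := (G.mem_edgeSet.mp he).symm
      have hne' : cov M₁ M₂ M₃ s(b, a) ≠ 1 := by rwa [Sym2.eq_swap]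
      obtain ⟨z, hz, hzx, hcz⟩ := (vertex_struct G hcub h1 h2 h3 hI hadj hne').1
      have hsum := (vertex_struct G hcub h1 h2 h3 hI hadj hne').2.2 z hz hzx hcz
      have hba : cov M₁ M₂ M₃ s(b, a) ≠ 0 := by
        rw [Sym2.eq_swap]; exact h0 _ he
      have hbz : cov M₁ M₂ M₃ s(b, z) ≠ 0 := h0 _ (G.mem_edgeSet.mpr hz)
      omega
  refine ⟨fun e => if e ∈ M₁ then ((1 : ZMod 2), (0 : ZMod 2)) else
    if e ∈ M₂ then (0, 1) else if e ∈ M₃ then (1, 1) else 0, ?_, ?_⟩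
  · intro e he
    rcases cov_cases hcub h1 h2 h3 hI (hcov1 e he) with ⟨a1, a2, a3⟩ | ⟨a1, a2, a3⟩ | ⟨a1, a2, a3⟩ <;>
      simp [a1, a2, a3, Prod.ext_iff]
  · intro e he f hf hef v hve hvf heq
    have same : ∀ M : Finset (Sym2 V), G.IsPM M → e ∈ M → f ∈ M → False := by
      intro M hM heM hfM
      obtain ⟨g, -, hg⟩ := hM.2 v
      exact hef ((hg e ⟨heM, hve⟩).trans (hg f ⟨hfM, hvf⟩).symm)
    rcases cov_cases hcub h1 h2 h3 hI (hcov1 e he) with ⟨a1, a2, a3⟩ | ⟨a1, a2, a3⟩ | ⟨a1, a2, a3⟩ <;>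
      rcases cov_cases hcub h1 h2 h3 hI (hcov1 f hf) with ⟨b1, b2, b3⟩ | ⟨b1, b2, b3⟩ | ⟨b1, b2, b3⟩ <;>
      simp only [a1, a2, a3, b1, b2, b3, if_true, if_false, if_neg, if_pos] at heq <;>
      first
        | exact same M₁ h1 a1 b1
        | exact same M₂ h2 a2 b2
        | exact same M₃ h3 a3 b3
        | (exfalso; revert heq; simp [Prod.ext_iff]; try decide)

end RDF

end RDFAux

/-- The regular defect of a snark is at least half its girth. -/
theorem regDefect_ge_half_girth {V : Type*} [Fintype V] [DecidableEq V]
    (G : SimpleGraph V) [DecidableRel G.Adj] (hG : G.IsSnark)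
    (hreg : ∃ M₁ M₂ M₃ : Finset (Sym2 V),
      G.IsPM M₁ ∧ G.IsPM M₂ ∧ G.IsPM M₃ ∧ M₁ ∩ M₂ ∩ M₃ = ∅) :
    G.girth ≤ 2 * (G.regDefect : ℕ∞) := by
  classical
  obtain ⟨N₁, N₂, N₃, g1, g2, g3, gI⟩ := hreg
  have hmem : G.regDefect ∈ {k | ∃ M₁ M₂ M₃ : Finset (Sym2 V),
      G.IsPM M₁ ∧ G.IsPM M₂ ∧ G.IsPM M₃ ∧ M₁ ∩ M₂ ∩ M₃ = ∅ ∧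
      (G.edgeFinset.filter (fun e => e ∉ M₁ ∧ e ∉ M₂ ∧ e ∉ M₃)).card = k} :=
    Nat.sInf_mem ⟨_, N₁, N₂, N₃, g1, g2, g3, gI, rfl⟩
  obtain ⟨M₁, M₂, M₃, h1, h2, h3, hI, hcard⟩ := hmem
  have hcub : G.IsCubic := hG.1
  by_cases hUe : G.edgeFinset.filter (fun e => e ∉ M₁ ∧ e ∉ M₂ ∧ e ∉ M₃) = ∅
  · exact absurd (RDF.exists_colouring hcub h1 h2 h3 hI hUe) hG.2.2
  · obtain ⟨e₀, he₀⟩ := Finset.nonempty_iff_ne_empty.mpr hUe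
    revert he₀
    induction e₀ with
    | h a b =>
      intro he₀
      rw [Finset.mem_filter] at he₀
      obtain ⟨heF, hn1, hn2, hn3⟩ := he₀
      have hGab : G.Adj a b := G.mem_edgeSet.mp (SimpleGraph.mem_edgeFinset.mp heF)
      have hcov0 : RDF.cov M₁ M₂ M₃ s(a, b) = 0 := RDF.cov_eq_zero hn1 hn2 hn3
      have hab : (RDF.auxH G M₁ M₂ M₃).Adj a b := ⟨hGab, by omega⟩
      set d₀ : RDF.DD G M₁ M₂ M₃ := ⟨(a, b), hab⟩ with hd₀
      set F := RDF.auxF hcub h1 h2 h3 hI with hF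
      have hex : ∃ n, 0 < n ∧ F^[n] d₀ = d₀ := RDF.auxF_period hcub h1 h2 h3 hI d₀
      set p := Nat.find hex with hpdef
      obtain ⟨hppos, hper⟩ : 0 < p ∧ F^[p] d₀ = d₀ := Nat.find_spec hex
      set H' := RDF.auxH G M₁ M₂ M₃ \ SimpleGraph.fromEdgeSet {s(a, b)} with hH'
      have hstep : ∀ i : ℕ, i + 1 < p →
          H'.Adj ((F^[i]) d₀).1.2 ((F^[i + 1]) d₀).1.2 := by
        intro i hip
        set d := (F^[i]) d₀ with hd
        have hit : (F^[i + 1]) d₀ = F d := Function.iterate_succ_apply' F i d₀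
        rw [hit]
        have hadj : (RDF.auxH G M₁ M₂ M₃).Adj d.1.2 (F d).1.2 := (F d).2
        rw [SimpleGraph.sdiff_adj]
        refine ⟨hadj, ?_⟩
        rw [SimpleGraph.fromEdgeSet_adj]
        rintro ⟨hcon, -⟩
        rw [Set.mem_singleton_iff, Sym2.eq_iff] at hcon
        rcases hcon with ⟨hx, hy⟩ | ⟨hx, hy⟩
        · -- F^[i+1] d₀ = d₀, contradicting minimality of p
          have : (F^[i + 1]) d₀ = d₀ := by
            rw [hit]
            exact Subtype.ext (Prod.ext hx hy)
          exact Nat.find_min hex (by omega : i + 1 < p) ⟨by omega, this⟩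
        · -- F^[i+1] d₀ = auxR d₀, contradicting no reversal
          have : (F^[i + 1]) d₀ = RDF.auxR d₀ := by
            rw [hit]
            exact Subtype.ext (Prod.ext hx hy)
          exact RDF.auxF_no_rev hcub h1 h2 h3 hI (i + 1) d₀ this
      have hreach : ∀ i : ℕ, i < p → H'.Reachable b ((F^[i]) d₀).1.2 := by
        intro i
        induction i with
        | zero => intro _; exact SimpleGraph.Reachable.refl b
        | succ i ihr =>
          intro hip
          exact (ihr (by omega)).trans (hstep i hip).reachable
      have hlast : ((F^[p - 1]) d₀).1.2 = a := by
        have h1' : F ((F^[p - 1]) d₀) = d₀ := by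
          have h2' : p - 1 + 1 = p := by omega
          calc F ((F^[p - 1]) d₀) = F^[p - 1 + 1] d₀ :=
                (Function.iterate_succ_apply' F (p - 1) d₀).symm
            _ = d₀ := by rw [h2', hper]
        have := RDF.auxF_fst hcub h1 h2 h3 hI ((F^[p - 1]) d₀)
        rw [← hF] at this
        rw [← this, h1']
      have hR : H'.Reachable a b := by
        have := hreach (p - 1) (by omega)
        rw [hlast] at this
        exact this.symm
      obtain ⟨u, w, hcyc, -⟩ :=
        (SimpleGraph.adj_and_reachable_delete_edges_iff_exists_cycle).mp ⟨hab, hR⟩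
      have hcount := RDF.cycle_count hcub h1 h2 h3 hI w hcyc
      have hwG : (SimpleGraph.Walk.mapLe (RDF.auxH_le G M₁ M₂ M₃) w).IsCycle :=
        hcyc.mapLe _
      have hegirth : G.egirth ≤ (w.length : ℕ∞) := by
        have hlenmap : (SimpleGraph.Walk.mapLe (RDF.auxH_le G M₁ M₂ M₃) w).length
            = w.length := by simp
        have : G.egirth ≤
            ((SimpleGraph.Walk.mapLe (RDF.auxH_le G M₁ M₂ M₃) w).length : ℕ∞) := by
          rw [SimpleGraph.egirth]
          exact iInf_le_of_le u (iInf_le_of_le _ (iInf_le _ hwG))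
        rwa [hlenmap] at this
      have hfin : G.egirth ≠ ⊤ :=
        fun htop => by simp [htop] at hegirth
      have hgir : (G.girth : ℕ∞) = G.egirth := ENat.coe_toNat hfin
      rw [hgir]
      calc G.egirth ≤ (w.length : ℕ∞) := hegirth
        _ ≤ ((2 * (G.edgeFinset.filter
              (fun e => e ∉ M₁ ∧ e ∉ M₂ ∧ e ∉ M₃)).card : ℕ) : ℕ∞) :=
            Nat.cast_le.mpr hcount
        _ = 2 * (G.regDefect : ℕ∞) := by rw [hcard]; push_cast; ring
end

section
/- If a bridgeless cubic graph G has a Fulkerson cover, then G admits two complementary regular 3-arrays: three perfect matchings {M₁, M₂, M₃} and three perfect matchings {M₄, M₅, M₆}, each triple with empty intersection, having the same core, such that the set of edges uncovered by the first triple equals the set of edges doubly covered by the second triple and vice versa. -/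
open Finset

/-- If a bridgeless cubic graph has a Fulkerson cover (six perfect matchings, with
multiplicity, covering each edge exactly twice), then it admits two complementary
regular 3-arrays: two triples of perfect matchings, each with empty intersection,
with the same core, the uncovered edges of one being the doubly covered edges of
the other and vice versa. -/
theorem fulkerson_cover_gives_complementary_arrays {V : Type*} [Fintype V]
    [DecidableEq V] (G : SimpleGraph V) [DecidableRel G.Adj] (hG : G.IsCubic)
    (hbridge : ∀ e ∈ G.edgeSet, ¬ G.IsBridge e)
    (M : Fin 6 → Finset (Sym2 V)) (hM : ∀ i, G.IsPM (M i))
    (hcover : ∀ e ∈ G.edgeFinset, (Finset.univ.filter (fun i => e ∈ M i)).card = 2) :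
    ∃ N₁ N₂ N₃ N₄ N₅ N₆ : Finset (Sym2 V),
      G.IsPM N₁ ∧ G.IsPM N₂ ∧ G.IsPM N₃ ∧ G.IsPM N₄ ∧ G.IsPM N₅ ∧ G.IsPM N₆ ∧
      N₁ ∩ N₂ ∩ N₃ = ∅ ∧ N₄ ∩ N₅ ∩ N₆ = ∅ ∧
      (∀ e ∈ G.edgeFinset, (cov N₁ N₂ N₃ e ≠ 1 ↔ cov N₄ N₅ N₆ e ≠ 1)) ∧
      (∀ e ∈ G.edgeFinset, (cov N₁ N₂ N₃ e = 0 ↔ cov N₄ N₅ N₆ e = 2)) ∧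
      (∀ e ∈ G.edgeFinset, (cov N₁ N₂ N₃ e = 2 ↔ cov N₄ N₅ N₆ e = 0)) := by
  refine ⟨M 0, M 1, M 2, M 3, M 4, M 5, hM 0, hM 1, hM 2, hM 3, hM 4, hM 5, ?_⟩
  have key : ∀ e ∈ G.edgeFinset,
      cov (M 0) (M 1) (M 2) e + cov (M 3) (M 4) (M 5) e = 2 := by
    intro e he
    have h := hcover e he
    rw [Finset.card_filter] at h
    rw [Fin.sum_univ_six] at h
    simp only [cov]
    omega
  have hmem : ∀ (i : Fin 6) (e : Sym2 V), e ∈ M i → e ∈ G.edgeFinset := by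
    intro i e he
    rw [SimpleGraph.mem_edgeFinset]
    exact (hM i).1 he
  refine ⟨?_, ?_, ?_, ?_, ?_⟩
  · ext e
    simp only [Finset.mem_inter, Finset.notMem_empty, iff_false, not_and]
    rintro ⟨h0, h1⟩ h2
    have := key e (hmem 0 e h0)
    simp only [cov, if_pos h0, if_pos h1, if_pos h2] at this
    omega
  · ext e
    simp only [Finset.mem_inter, Finset.notMem_empty, iff_false, not_and]
    rintro ⟨h0, h1⟩ h2
    have := key e (hmem 3 e h0)
    simp only [cov, if_pos h0, if_pos h1, if_pos h2] at this
    omega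
  · intro e he; have := key e he; omega
  · intro e he; have := key e he; omega
  · intro e he; have := key e he; omega
end

section
/- Let G be a bridgeless cubic graph admitting two complementary regular 3-arrays with common core Q, and for i ∈ {1,2} let Pᵢ be the set of edges uncovered by the i-th array. Then P₁ and P₂ are disjoint matchings, P₁ ∪ P₂ = E(Q) is a disjoint union of circuits, and for each i the graph G − Pᵢ admits a nowhere-zero Z₂×Z₂-flow (equivalently, a nowhere-zero 4-flow). -/
open Finset

/-- A nowhere-zero `Z₂×Z₂`-flow on the spanning subgraph of `G` with edge set
`G.edgeFinset \ P`. -/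
def HasNZFlowOff {V : Type*} [Fintype V] [DecidableEq V] (G : SimpleGraph V)
    [DecidableRel G.Adj] (P : Finset (Sym2 V)) : Prop :=
  ∃ φ : Sym2 V → ZMod 2 × ZMod 2,
    (∀ e ∈ G.edgeFinset \ P, φ e ≠ 0) ∧
    ∀ v : V, ∑ e ∈ (G.edgeFinset \ P).filter (fun e => v ∈ e), φ e = 0

private lemma sum_triple {α : Type*} [DecidableEq α] {a b c : α} (hab : a ≠ b) (hac : a ≠ c)
    (hbc : b ≠ c) {M : Type*} [AddCommMonoid M] (f : α → M) :
    ∑ x ∈ ({a, b, c} : Finset α), f x = f a + f b + f c := by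
  rw [show ({a, b, c} : Finset α) = insert a (insert b {c}) from rfl,
    Finset.sum_insert (by simp [hab, hac]), Finset.sum_insert (by simp [hbc]),
    Finset.sum_singleton, add_assoc]

private lemma pm_card {V : Type*} [DecidableEq V] {G : SimpleGraph V} {M : Finset (Sym2 V)}
    (h : G.IsPM M) (v : V) : (M.filter (fun e => v ∈ e)).card = 1 := by
  obtain ⟨e, ⟨he, hv⟩, hu⟩ := h.2 v
  rw [Finset.card_eq_one]
  refine ⟨e, ?_⟩
  ext f
  simp only [mem_filter, mem_singleton]
  constructor
  · exact fun hf => hu f hf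
  · rintro rfl; exact ⟨he, hv⟩

private lemma filter_inc {V : Type*} [Fintype V] [DecidableEq V] {G : SimpleGraph V}
    [DecidableRel G.Adj] {M : Finset (Sym2 V)} (hM : ↑M ⊆ G.edgeSet) (v : V) :
    (G.edgeFinset.filter (fun e => v ∈ e)).filter (fun e => e ∈ M)
      = M.filter (fun e => v ∈ e) := by
  ext e
  simp only [mem_filter, SimpleGraph.mem_edgeFinset]
  exact ⟨fun h => ⟨h.2, h.1.2⟩, fun h => ⟨⟨hM h.1, h.2⟩, h.1⟩⟩

private lemma sum_cov {V : Type*} [Fintype V] [DecidableEq V] {G : SimpleGraph V}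
    [DecidableRel G.Adj] {M₁ M₂ M₃ : Finset (Sym2 V)}
    (h₁ : G.IsPM M₁) (h₂ : G.IsPM M₂) (h₃ : G.IsPM M₃) (v : V) :
    ∑ e ∈ G.edgeFinset.filter (fun e => v ∈ e), cov M₁ M₂ M₃ e = 3 := by
  unfold cov
  rw [Finset.sum_add_distrib, Finset.sum_add_distrib, ← Finset.card_filter,
    ← Finset.card_filter, ← Finset.card_filter, filter_inc h₁.1, filter_inc h₂.1,
    filter_inc h₃.1, pm_card h₁, pm_card h₂, pm_card h₃]

private lemma cov_le_two {V : Type*} [DecidableEq V] {M₁ M₂ M₃ : Finset (Sym2 V)}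
    (hreg : M₁ ∩ M₂ ∩ M₃ = ∅) (e : Sym2 V) : cov M₁ M₂ M₃ e ≤ 2 := by
  unfold cov
  split_ifs with h1 h2 h3 <;> try omega
  exact absurd (Finset.mem_inter.2 ⟨Finset.mem_inter.2 ⟨h1, h2⟩, h3⟩) (by simp [hreg])

private lemma exists_triple {V : Type*} [Fintype V] [DecidableEq V] (G : SimpleGraph V)
    [DecidableRel G.Adj] (hG : G.IsCubic) (v : V) :
    ∃ a b c : Sym2 V, a ≠ b ∧ a ≠ c ∧ b ≠ c ∧
      G.edgeFinset.filter (fun e => v ∈ e) = {a, b, c} := by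
  have h3 : (G.edgeFinset.filter (fun e => v ∈ e)).card = 3 := by
    rw [← G.incidenceFinset_eq_filter v, SimpleGraph.card_incidenceFinset_eq_degree, hG v]
  exact Finset.card_eq_three.mp h3

private lemma flow_off {V : Type*} [Fintype V] [DecidableEq V] (G : SimpleGraph V)
    [DecidableRel G.Adj] {M₁ M₂ M₃ : Finset (Sym2 V)}
    (h₁ : G.IsPM M₁) (h₂ : G.IsPM M₂) (h₃ : G.IsPM M₃) (hreg : M₁ ∩ M₂ ∩ M₃ = ∅) :
    HasNZFlowOff G (G.edgeFinset.filter (fun e => cov M₁ M₂ M₃ e = 0)) := by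
  set P := G.edgeFinset.filter (fun e => cov M₁ M₂ M₃ e = 0) with hP
  refine ⟨fun e => ((if e ∈ M₁ then 1 else 0) + (if e ∈ M₂ then 1 else 0),
      (if e ∈ M₂ then 1 else 0) + (if e ∈ M₃ then 1 else 0)), ?_, ?_⟩
  · intro e he
    rw [Finset.mem_sdiff, hP, Finset.mem_filter, not_and] at he
    have hc0 : cov M₁ M₂ M₃ e ≠ 0 := he.2 he.1
    have hc2 : cov M₁ M₂ M₃ e ≤ 2 := cov_le_two hreg e
    unfold cov at hc0 hc2
    by_cases hm1 : e ∈ M₁ <;> by_cases hm2 : e ∈ M₂ <;> by_cases hm3 : e ∈ M₃ <;>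
      simp only [hm1, hm2, hm3, if_true, if_false] at hc0 hc2 ⊢ <;>
      first
        | omega
        | (simp only [ne_eq, Prod.mk_eq_zero, not_and]; decide)
  · intro v
    have hPsub : P.filter (fun e => v ∈ e) ⊆ G.edgeFinset.filter (fun e => v ∈ e) :=
      Finset.filter_subset_filter _ (Finset.filter_subset _ _)
    have hsd : (G.edgeFinset \ P).filter (fun e => v ∈ e)
        = (G.edgeFinset.filter (fun e => v ∈ e)) \ (P.filter (fun e => v ∈ e)) := by
      ext e
      simp only [Finset.mem_sdiff, Finset.mem_filter, hP]
      tauto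
    rw [hsd, Finset.sum_sdiff_eq_sub hPsub]
    have hPzero : ∀ e ∈ P.filter (fun e => v ∈ e),
        ((if e ∈ M₁ then (1 : ZMod 2) else 0) + (if e ∈ M₂ then 1 else 0),
          (if e ∈ M₂ then (1 : ZMod 2) else 0) + (if e ∈ M₃ then 1 else 0))
          = (0 : ZMod 2 × ZMod 2) := by
      intro e he
      rw [Finset.mem_filter, hP, Finset.mem_filter] at he
      have hc : cov M₁ M₂ M₃ e = 0 := he.1.2
      unfold cov at hc
      have hm1 : e ∉ M₁ := by intro h; simp [h] at hc
      have hm2 : e ∉ M₂ := by intro h; simp [h] at hc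
      have hm3 : e ∉ M₃ := by intro h; simp [h] at hc
      simp [hm1, hm2, hm3]
    rw [Finset.sum_eq_zero hPzero, sub_zero]
    have key : ∀ (M : Finset (Sym2 V)), G.IsPM M →
        ∑ e ∈ G.edgeFinset.filter (fun e => v ∈ e),
          (if e ∈ M then (1 : ZMod 2) else 0) = 1 := by
      intro M hM
      rw [Finset.sum_boole, filter_inc hM.1, pm_card hM]
      norm_num
    apply Prod.ext
    · rw [Prod.fst_sum]
      simp only
      rw [Finset.sum_add_distrib, key M₁ h₁, key M₂ h₂]
      decide
    · rw [Prod.snd_sum]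
      simp only
      rw [Finset.sum_add_distrib, key M₂ h₂, key M₃ h₃]
      decide

/-- Complementary regular 3-arrays yield two disjoint matchings `P₁, P₂` whose union
is the edge set of the common core, a disjoint union of circuits, and `G − Pᵢ` admits
a nowhere-zero `Z₂×Z₂`-flow for each `i`. -/
theorem complementary_arrays_give_flows {V : Type*} [Fintype V] [DecidableEq V]
    (G : SimpleGraph V) [DecidableRel G.Adj] (hG : G.IsCubic)
    (hbridge : ∀ e ∈ G.edgeSet, ¬ G.IsBridge e)
    (M₁ M₂ M₃ N₁ N₂ N₃ : Finset (Sym2 V))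
    (hM : G.IsPM M₁ ∧ G.IsPM M₂ ∧ G.IsPM M₃) (hN : G.IsPM N₁ ∧ G.IsPM N₂ ∧ G.IsPM N₃)
    (hMreg : M₁ ∩ M₂ ∩ M₃ = ∅) (hNreg : N₁ ∩ N₂ ∩ N₃ = ∅)
    (hsamecore : ∀ e ∈ G.edgeFinset, (cov M₁ M₂ M₃ e ≠ 1 ↔ cov N₁ N₂ N₃ e ≠ 1))
    (P₁ P₂ : Finset (Sym2 V))
    (hP₁ : P₁ = G.edgeFinset.filter (fun e => cov M₁ M₂ M₃ e = 0))
    (hP₂ : P₂ = G.edgeFinset.filter (fun e => cov N₁ N₂ N₃ e = 0))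
    (hdisj : P₁ ∩ P₂ = ∅) :
    (∀ v : V, (P₁.filter (fun e => v ∈ e)).card ≤ 1) ∧
    (∀ v : V, (P₂.filter (fun e => v ∈ e)).card ≤ 1) ∧
    P₁ ∪ P₂ = G.edgeFinset.filter (fun e => cov M₁ M₂ M₃ e ≠ 1) ∧
    (∀ v : V, ((P₁ ∪ P₂).filter (fun e => v ∈ e)).card = 0 ∨
      ((P₁ ∪ P₂).filter (fun e => v ∈ e)).card = 2) ∧
    HasNZFlowOff G P₁ ∧ HasNZFlowOff G P₂ := by
  obtain ⟨hM₁, hM₂, hM₃⟩ := hM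
  obtain ⟨hN₁, hN₂, hN₃⟩ := hN
  have match_le : ∀ (A₁ A₂ A₃ : Finset (Sym2 V)), G.IsPM A₁ → G.IsPM A₂ → G.IsPM A₃ →
      A₁ ∩ A₂ ∩ A₃ = ∅ → ∀ v : V,
      ((G.edgeFinset.filter (fun e => cov A₁ A₂ A₃ e = 0)).filter
        (fun e => v ∈ e)).card ≤ 1 := by
    intro A₁ A₂ A₃ h₁ h₂ h₃ hreg v
    obtain ⟨a, b, c, hab, hac, hbc, htrip⟩ := exists_triple G hG v
    have hsum := sum_cov h₁ h₂ h₃ v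
    rw [htrip, sum_triple hab hac hbc] at hsum
    have ha := cov_le_two hreg a
    have hb := cov_le_two hreg b
    have hc := cov_le_two hreg c
    rw [Finset.filter_comm, htrip, Finset.card_filter, sum_triple hab hac hbc]
    split_ifs <;> omega
  -- the core equality
  have hcore : P₁ ∪ P₂ = G.edgeFinset.filter (fun e => cov M₁ M₂ M₃ e ≠ 1) := by
    ext e
    simp only [Finset.mem_union, hP₁, hP₂, Finset.mem_filter]
    constructor
    · rintro (⟨he, h0⟩ | ⟨he, h0⟩)
      · exact ⟨he, by omega⟩
      · exact ⟨he, (hsamecore e he).2 (by omega)⟩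
    · rintro ⟨he, hne⟩
      have hle := cov_le_two hMreg e
      rcases Nat.lt_or_ge (cov M₁ M₂ M₃ e) 1 with h | h
      · exact Or.inl ⟨he, by omega⟩
      have h2 : cov M₁ M₂ M₃ e = 2 := by omega
      refine Or.inr ⟨he, ?_⟩
      have hv : e.out.1 ∈ e := Sym2.out_fst_mem e
      set v := e.out.1 with hvdef
      obtain ⟨a, b, c, hab, hac, hbc, htrip⟩ := exists_triple G hG v
      have hsumM := sum_cov hM₁ hM₂ hM₃ v
      rw [htrip, sum_triple hab hac hbc] at hsumM
      have hsumN := sum_cov hN₁ hN₂ hN₃ v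
      rw [htrip, sum_triple hab hac hbc] at hsumN
      have heI : e ∈ ({a, b, c} : Finset (Sym2 V)) := by
        rw [← htrip]; exact Finset.mem_filter.2 ⟨he, hv⟩
      have hmem : ∀ f ∈ ({a, b, c} : Finset (Sym2 V)), f ∈ G.edgeFinset := by
        intro f hf; rw [← htrip] at hf; exact (Finset.mem_filter.1 hf).1
      have keyf : ∀ f ∈ ({a, b, c} : Finset (Sym2 V)), cov M₁ M₂ M₃ f = 0 →
          cov N₁ N₂ N₃ f = 2 := by
        intro f hf h0
        have hfe := hmem f hf
        have hN1 : cov N₁ N₂ N₃ f ≠ 1 := (hsamecore f hfe).1 (by omega)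
        have hN0 : cov N₁ N₂ N₃ f ≠ 0 := by
          intro hN0
          have hmem2 : f ∈ P₁ ∩ P₂ := Finset.mem_inter.2
            ⟨by rw [hP₁]; exact Finset.mem_filter.2 ⟨hfe, h0⟩,
             by rw [hP₂]; exact Finset.mem_filter.2 ⟨hfe, hN0⟩⟩
          rw [hdisj] at hmem2
          exact absurd hmem2 (Finset.notMem_empty f)
        have := cov_le_two hNreg f
        omega
      by_contra hNe
      have hNe1 : cov N₁ N₂ N₃ e ≠ 1 := (hsamecore e he).1 (by omega)
      have hNele := cov_le_two hNreg e
      have hNe2 : cov N₁ N₂ N₃ e = 2 := by omega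
      have hma := cov_le_two hMreg a
      have hmb := cov_le_two hMreg b
      have hmc := cov_le_two hMreg c
      simp only [Finset.mem_insert, Finset.mem_singleton] at heI
      rcases heI with rfl | rfl | rfl
      · have hd : cov M₁ M₂ M₃ b = 0 ∨ cov M₁ M₂ M₃ c = 0 := by omega
        rcases hd with h0 | h0
        · have := keyf b (by simp) h0; omega
        · have := keyf c (by simp) h0; omega
      · have hd : cov M₁ M₂ M₃ a = 0 ∨ cov M₁ M₂ M₃ c = 0 := by omega
        rcases hd with h0 | h0
        · have := keyf a (by simp) h0; omega
        · have := keyf c (by simp) h0; omega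
      · have hd : cov M₁ M₂ M₃ a = 0 ∨ cov M₁ M₂ M₃ b = 0 := by omega
        rcases hd with h0 | h0
        · have := keyf a (by simp) h0; omega
        · have := keyf b (by simp) h0; omega
  refine ⟨?_, ?_, hcore, ?_, ?_, ?_⟩
  · intro v; rw [hP₁]; exact match_le M₁ M₂ M₃ hM₁ hM₂ hM₃ hMreg v
  · intro v; rw [hP₂]; exact match_le N₁ N₂ N₃ hN₁ hN₂ hN₃ hNreg v
  · intro v
    obtain ⟨a, b, c, hab, hac, hbc, htrip⟩ := exists_triple G hG v
    have hsum := sum_cov hM₁ hM₂ hM₃ v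
    rw [htrip, sum_triple hab hac hbc] at hsum
    have ha := cov_le_two hMreg a
    have hb := cov_le_two hMreg b
    have hc := cov_le_two hMreg c
    rw [hcore, Finset.filter_comm, htrip, Finset.card_filter, sum_triple hab hac hbc]
    split_ifs <;> omega
  · rw [hP₁]; exact flow_off G hM₁ hM₂ hM₃ hMreg
  · rw [hP₂]; exact flow_off G hN₁ hN₂ hN₃ hNreg
end

section
/- Let G be a bridgeless cubic graph containing two disjoint matchings P₁ and P₂ such that P₁ ∪ P₂ is a disjoint union of circuits of G and both G − P₁ and G − P₂ admit nowhere-zero Z₂×Z₂-flows. Then G has a Fulkerson cover: six perfect matchings such that each edge of G belongs to exactly two of them. -/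
open Finset

/- ### Auxiliary lemmas -/

lemma zmod22_cases (y : ZMod 2 × ZMod 2) (hy : y ≠ 0) :
    y = (1,0) ∨ y = (0,1) ∨ y = (1,1) := by revert hy; revert y; decide

lemma sum3 (A B C x : ZMod 2 × ZMod 2)
    (h : A ≠ 0 ∧ B ≠ 0 ∧ C ≠ 0 ∧ x ≠ 0 ∧ A + B + C = 0) :
    ((if A = x then 1 else 0) + (if B = x then 1 else 0) + (if C = x then 1 else 0) : ℕ) = 1 := by
  revert h; revert A B C x; decide

lemma two_eq (A B : ZMod 2 × ZMod 2) (h : A + B = 0) : A = B := by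
  revert h; revert A B; decide

lemma card_one_existsUnique {α : Type*} {M : Finset α} {p : α → Prop} [DecidablePred p]
    (h : (M.filter p).card = 1) : ∃! e, e ∈ M ∧ p e := by
  obtain ⟨a, ha⟩ := Finset.card_eq_one.mp h
  have haM : a ∈ M.filter p := ha ▸ Finset.mem_singleton_self a
  refine ⟨a, ⟨(Finset.mem_filter.mp haM).1, (Finset.mem_filter.mp haM).2⟩, ?_⟩
  intro b hb
  have : b ∈ M.filter p := Finset.mem_filter.mpr hb
  rw [ha, Finset.mem_singleton] at this
  exact this

lemma three_filter {α : Type*} [DecidableEq α] {S : Finset α} {φ : α → ZMod 2 × ZMod 2}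
    (h3 : S.card = 3) (hnz : ∀ e ∈ S, φ e ≠ 0) (hsum : ∑ e ∈ S, φ e = 0)
    {x : ZMod 2 × ZMod 2} (hx : x ≠ 0) :
    (S.filter (fun e => φ e = x)).card = 1 := by
  obtain ⟨a, b, c, hab, hac, hbc, rfl⟩ := Finset.card_eq_three.mp h3
  have ha : a ∈ ({a, b, c} : Finset α) := by simp
  have hb : b ∈ ({a, b, c} : Finset α) := by simp
  have hc : c ∈ ({a, b, c} : Finset α) := by simp
  have hsum' : φ a + φ b + φ c = 0 := by
    rw [show ({a, b, c} : Finset α) = insert a (insert b {c}) from rfl,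
      Finset.sum_insert (by simp [hab, hac]), Finset.sum_insert (by simp [hbc]),
      Finset.sum_singleton, ← add_assoc] at hsum
    exact hsum
  rw [Finset.card_filter,
    show ({a, b, c} : Finset α) = insert a (insert b {c}) from rfl,
    Finset.sum_insert (by simp [hab, hac]), Finset.sum_insert (by simp [hbc]),
    Finset.sum_singleton, ← add_assoc]
  exact sum3 _ _ _ _ ⟨hnz a ha, hnz b hb, hnz c hc, hx, hsum'⟩

lemma vec6_five {α : Type*} (a b c d e f : α) : (![a,b,c,d,e,f] : Fin 6 → α) 5 = f := rfl

/-- The candidate perfect matching built from a flow. -/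
def Fm {V : Type*} [DecidableEq V] (E P P' : Finset (Sym2 V))
    (φ : Sym2 V → ZMod 2 × ZMod 2) (x : ZMod 2 × ZMod 2) : Finset (Sym2 V) :=
  E.filter (fun e => e ∉ P ∧ e ∉ P' ∧ φ e = x) ∪ P'.filter (fun e => φ e ≠ x)

lemma mem_Fm {V : Type*} [DecidableEq V] {E P P' : Finset (Sym2 V)}
    {φ : Sym2 V → ZMod 2 × ZMod 2} {x : ZMod 2 × ZMod 2} {e : Sym2 V} :
    e ∈ Fm E P P' φ x ↔ (e ∈ E ∧ e ∉ P ∧ e ∉ P' ∧ φ e = x) ∨ (e ∈ P' ∧ φ e ≠ x) := by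
  simp [Fm, and_assoc]

lemma Fm_isPM {V : Type*} [Fintype V] [DecidableEq V]
    (G : SimpleGraph V) [DecidableRel G.Adj] (hG : G.IsCubic)
    (P P' : Finset (Sym2 V)) (hP : P ⊆ G.edgeFinset) (hP' : P' ⊆ G.edgeFinset)
    (hd : P ∩ P' = ∅)
    (hm : ∀ v : V, (P.filter (fun e => v ∈ e)).card ≤ 1)
    (hm' : ∀ v : V, (P'.filter (fun e => v ∈ e)).card ≤ 1)
    (hc : ∀ v : V, ((P ∪ P').filter (fun e => v ∈ e)).card = 0 ∨
      ((P ∪ P').filter (fun e => v ∈ e)).card = 2)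
    (φ : Sym2 V → ZMod 2 × ZMod 2)
    (hnz : ∀ e ∈ G.edgeFinset \ P, φ e ≠ 0)
    (hsum : ∀ v : V, ∑ e ∈ (G.edgeFinset \ P).filter (fun e => v ∈ e), φ e = 0)
    (x : ZMod 2 × ZMod 2) (hx : x ≠ 0) :
    G.IsPM (Fm G.edgeFinset P P' φ x) := by
  have hdisj : ∀ e, e ∈ P → e ∉ P' := by
    intro e heP heP'
    have : e ∈ P ∩ P' := Finset.mem_inter.mpr ⟨heP, heP'⟩
    simp [hd] at this
  constructor
  · intro e he
    rcases mem_Fm.mp he with h | h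
    · exact (G.mem_edgeFinset).mp h.1
    · exact (G.mem_edgeFinset).mp (hP' h.1)
  · intro v
    -- the incidence finset has 3 elements
    have hI : (G.edgeFinset.filter (fun e => v ∈ e)).card = 3 := by
      have := G.card_incidenceFinset_eq_degree (v := v)
      rw [G.incidenceFinset_eq_filter] at this
      rw [this, hG v]
    have hsplit : ((P ∪ P').filter (fun e => v ∈ e)).card
        = (P.filter (fun e => v ∈ e)).card + (P'.filter (fun e => v ∈ e)).card := by
      rw [Finset.filter_union]
      exact Finset.card_union_of_disjoint (Finset.disjoint_filter_filter
        (Finset.disjoint_iff_inter_eq_empty.mpr hd))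
    apply card_one_existsUnique (p := fun e => v ∈ e)
    rcases hc v with h0 | h2
    · -- no incident edge of P ∪ P'
      have hk : (P.filter (fun e => v ∈ e)).card = 0 := by omega
      have hk' : (P'.filter (fun e => v ∈ e)).card = 0 := by omega
      have hkP : ∀ e, v ∈ e → e ∉ P := by
        intro e hv heP
        have : e ∈ P.filter (fun e => v ∈ e) := Finset.mem_filter.mpr ⟨heP, hv⟩
        simp [Finset.card_eq_zero.mp hk] at this
      have hkP' : ∀ e, v ∈ e → e ∉ P' := by
        intro e hv heP
        have : e ∈ P'.filter (fun e => v ∈ e) := Finset.mem_filter.mpr ⟨heP, hv⟩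
        simp [Finset.card_eq_zero.mp hk'] at this
      have hS : ((G.edgeFinset \ P).filter (fun e => v ∈ e))
          = G.edgeFinset.filter (fun e => v ∈ e) := by
        ext e
        simp only [Finset.mem_filter, Finset.mem_sdiff]
        constructor
        · rintro ⟨⟨h1, _⟩, h2⟩; exact ⟨h1, h2⟩
        · rintro ⟨h1, h2⟩; exact ⟨⟨h1, hkP e h2⟩, h2⟩
      have heq : (Fm G.edgeFinset P P' φ x).filter (fun e => v ∈ e)
          = ((G.edgeFinset \ P).filter (fun e => v ∈ e)).filter (fun e => φ e = x) := by
        ext e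
        simp only [Finset.mem_filter, Finset.mem_sdiff, mem_Fm]
        constructor
        · rintro ⟨h | h, hv⟩
          · exact ⟨⟨⟨h.1, h.2.1⟩, hv⟩, h.2.2.2⟩
          · exact absurd h.1 (hkP' e hv)
        · rintro ⟨⟨⟨h1, h2⟩, hv⟩, hφ⟩
          exact ⟨Or.inl ⟨h1, h2, hkP' e hv, hφ⟩, hv⟩
      rw [heq]
      apply three_filter
      · rw [hS]; exact hI
      · intro e he
        exact hnz e (Finset.mem_filter.mp he).1
      · exact hsum v
      · exact hx
    · -- one incident edge in each of P, P'
      have hk : (P.filter (fun e => v ∈ e)).card = 1 := by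
        have := hm v; have := hm' v; omega
      have hk' : (P'.filter (fun e => v ∈ e)).card = 1 := by
        have := hm v; have := hm' v; omega
      obtain ⟨e₁, he₁⟩ := Finset.card_eq_one.mp hk
      obtain ⟨e₂, he₂⟩ := Finset.card_eq_one.mp hk'
      have he₁P : e₁ ∈ P ∧ v ∈ e₁ := by
        have : e₁ ∈ P.filter (fun e => v ∈ e) := he₁ ▸ Finset.mem_singleton_self e₁
        exact Finset.mem_filter.mp this
      have he₂P' : e₂ ∈ P' ∧ v ∈ e₂ := by
        have : e₂ ∈ P'.filter (fun e => v ∈ e) := he₂ ▸ Finset.mem_singleton_self e₂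
        exact Finset.mem_filter.mp this
      set S := (G.edgeFinset \ P).filter (fun e => v ∈ e) with hSdef
      have hSeq : S = (G.edgeFinset.filter (fun e => v ∈ e)) \ {e₁} := by
        ext e
        simp only [hSdef, Finset.mem_filter, Finset.mem_sdiff, Finset.mem_singleton]
        constructor
        · rintro ⟨⟨h1, h2⟩, hv⟩
          refine ⟨⟨h1, hv⟩, ?_⟩
          rintro rfl; exact h2 he₁P.1
        · rintro ⟨⟨h1, hv⟩, hne⟩
          refine ⟨⟨h1, ?_⟩, hv⟩
          intro heP
          have : e ∈ P.filter (fun e => v ∈ e) := Finset.mem_filter.mpr ⟨heP, hv⟩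
          rw [he₁, Finset.mem_singleton] at this
          exact hne this
      have hScard : S.card = 2 := by
        rw [hSeq, Finset.card_sdiff_of_subset]
        · rw [hI]; simp
        · intro e he
          rw [Finset.mem_singleton] at he
          subst he
          exact Finset.mem_filter.mpr ⟨hP he₁P.1, he₁P.2⟩
      have he₂S : e₂ ∈ S := by
        refine Finset.mem_filter.mpr ⟨Finset.mem_sdiff.mpr ⟨hP' he₂P'.1, ?_⟩, he₂P'.2⟩
        intro h; exact hdisj e₂ h he₂P'.1
      obtain ⟨f, hf⟩ : ∃ f, S.erase e₂ = {f} := by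
        apply Finset.card_eq_one.mp
        rw [Finset.card_erase_of_mem he₂S, hScard]
      have hfS : f ∈ S := Finset.mem_of_mem_erase (hf ▸ Finset.mem_singleton_self f)
      have hfne : f ≠ e₂ := Finset.ne_of_mem_erase (hf ▸ Finset.mem_singleton_self f)
      have hSpair : S = {e₂, f} := by
        ext e
        constructor
        · intro he
          by_cases h : e = e₂
          · simp [h]
          · have : e ∈ S.erase e₂ := Finset.mem_erase.mpr ⟨h, he⟩
            rw [hf, Finset.mem_singleton] at this
            simp [this]
        · intro he
          rcases Finset.mem_insert.mp he with rfl | he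
          · exact he₂S
          · rw [Finset.mem_singleton] at he; subst he; exact hfS
      have hfE : f ∈ G.edgeFinset ∧ f ∉ P := by
        have := (Finset.mem_filter.mp hfS).1
        exact Finset.mem_sdiff.mp this
      have hfv : v ∈ f := (Finset.mem_filter.mp hfS).2
      have hfP' : f ∉ P' := by
        intro h
        have : f ∈ P'.filter (fun e => v ∈ e) := Finset.mem_filter.mpr ⟨h, hfv⟩
        rw [he₂, Finset.mem_singleton] at this
        exact hfne this
      have hφeq : φ e₂ = φ f := by
        apply two_eq
        have := hsum v
        rw [← hSdef, hSpair, Finset.sum_pair (Ne.symm hfne)] at this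
        exact this
      have heq : (Fm G.edgeFinset P P' φ x).filter (fun e => v ∈ e)
          = if φ f = x then {f} else {e₂} := by
        ext e
        simp only [Finset.mem_filter, mem_Fm]
        constructor
        · rintro ⟨h | h, hv⟩
          · -- e ∈ E, ∉ P, ∉ P', φ e = x
            have heS : e ∈ S := Finset.mem_filter.mpr
              ⟨Finset.mem_sdiff.mpr ⟨h.1, h.2.1⟩, hv⟩
            rw [hSpair] at heS
            rcases Finset.mem_insert.mp heS with rfl | heS
            · exact absurd he₂P'.1 h.2.2.1
            · rw [Finset.mem_singleton] at heS; subst heS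
              rw [if_pos h.2.2.2]
              exact Finset.mem_singleton_self e
          · -- e ∈ P', φ e ≠ x
            have : e ∈ P'.filter (fun e => v ∈ e) := Finset.mem_filter.mpr ⟨h.1, hv⟩
            rw [he₂, Finset.mem_singleton] at this
            subst this
            rw [if_neg (by rw [← hφeq]; exact h.2)]
            exact Finset.mem_singleton_self e
        · intro he
          by_cases hfx : φ f = x
          · rw [if_pos hfx, Finset.mem_singleton] at he
            subst he
            exact ⟨Or.inl ⟨hfE.1, hfE.2, hfP', hfx⟩, hfv⟩
          · rw [if_neg hfx, Finset.mem_singleton] at he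
            subst he
            exact ⟨Or.inr ⟨he₂P'.1, by rw [hφeq]; exact hfx⟩, he₂P'.2⟩
      rw [heq]
      split <;> simp

/-- If a bridgeless cubic graph contains two disjoint matchings `P₁, P₂` whose union
is a disjoint union of circuits, such that `G − P₁` and `G − P₂` admit nowhere-zero
`Z₂×Z₂`-flows, then `G` has a Fulkerson cover. -/
theorem flows_give_fulkerson_cover {V : Type*} [Fintype V] [DecidableEq V]
    (G : SimpleGraph V) [DecidableRel G.Adj] (hG : G.IsCubic)
    (hbridge : ∀ e ∈ G.edgeSet, ¬ G.IsBridge e)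
    (P₁ P₂ : Finset (Sym2 V)) (hP₁ : P₁ ⊆ G.edgeFinset) (hP₂ : P₂ ⊆ G.edgeFinset)
    (hdisj : P₁ ∩ P₂ = ∅)
    (hm₁ : ∀ v : V, (P₁.filter (fun e => v ∈ e)).card ≤ 1)
    (hm₂ : ∀ v : V, (P₂.filter (fun e => v ∈ e)).card ≤ 1)
    (hcirc : ∀ v : V, ((P₁ ∪ P₂).filter (fun e => v ∈ e)).card = 0 ∨
      ((P₁ ∪ P₂).filter (fun e => v ∈ e)).card = 2)
    (hf₁ : HasNZFlowOff G P₁) (hf₂ : HasNZFlowOff G P₂) :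
    ∃ M : Fin 6 → Finset (Sym2 V), (∀ i, G.IsPM (M i)) ∧
      ∀ e ∈ G.edgeFinset, (Finset.univ.filter (fun i => e ∈ M i)).card = 2 := by
  obtain ⟨φ₁, hnz₁, hsum₁⟩ := hf₁
  obtain ⟨φ₂, hnz₂, hsum₂⟩ := hf₂
  have hdisj' : P₂ ∩ P₁ = ∅ := by rw [Finset.inter_comm]; exact hdisj
  have hcirc' : ∀ v : V, ((P₂ ∪ P₁).filter (fun e => v ∈ e)).card = 0 ∨
      ((P₂ ∪ P₁).filter (fun e => v ∈ e)).card = 2 := by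
    intro v; rw [Finset.union_comm]; exact hcirc v
  have hnotboth : ∀ e, e ∈ P₁ → e ∉ P₂ := by
    intro e h1 h2
    have : e ∈ P₁ ∩ P₂ := Finset.mem_inter.mpr ⟨h1, h2⟩
    simp [hdisj] at this
  refine ⟨![Fm G.edgeFinset P₁ P₂ φ₁ (1,0), Fm G.edgeFinset P₁ P₂ φ₁ (0,1),
      Fm G.edgeFinset P₁ P₂ φ₁ (1,1), Fm G.edgeFinset P₂ P₁ φ₂ (1,0),
      Fm G.edgeFinset P₂ P₁ φ₂ (0,1), Fm G.edgeFinset P₂ P₁ φ₂ (1,1)], ?_, ?_⟩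
  · have pm1 : ∀ x : ZMod 2 × ZMod 2, x ≠ 0 → G.IsPM (Fm G.edgeFinset P₁ P₂ φ₁ x) :=
      fun x hx => Fm_isPM G hG P₁ P₂ hP₁ hP₂ hdisj hm₁ hm₂ hcirc φ₁ hnz₁ hsum₁ x hx
    have pm2 : ∀ x : ZMod 2 × ZMod 2, x ≠ 0 → G.IsPM (Fm G.edgeFinset P₂ P₁ φ₂ x) :=
      fun x hx => Fm_isPM G hG P₂ P₁ hP₂ hP₁ hdisj' hm₂ hm₁ hcirc' φ₂ hnz₂ hsum₂ x hx
    intro i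
    fin_cases i
    · exact pm1 (1,0) (by decide)
    · exact pm1 (0,1) (by decide)
    · exact pm1 (1,1) (by decide)
    · exact pm2 (1,0) (by decide)
    · exact pm2 (0,1) (by decide)
    · exact pm2 (1,1) (by decide)
  · intro e he
    rw [Finset.card_filter, Fin.sum_univ_six]
    simp only [Matrix.cons_val_zero, Matrix.cons_val_one, Matrix.head_cons,
      Matrix.cons_val_two, Matrix.tail_cons, Matrix.cons_val_three,
      Matrix.cons_val_four, Matrix.cons_val_fin_one, vec6_five]
    by_cases h1 : e ∈ P₁
    · have h2 : e ∉ P₂ := hnotboth e h1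
      have hz : φ₂ e ≠ 0 := hnz₂ e (Finset.mem_sdiff.mpr ⟨he, h2⟩)
      simp only [mem_Fm, h1, h2, he, not_true_eq_false, not_false_eq_true,
        true_and, false_and, and_false, and_true, false_or, or_false, if_false]
      rcases zmod22_cases (φ₂ e) hz with h | h | h <;> rw [h] <;> decide
    · by_cases h2 : e ∈ P₂
      · have hz : φ₁ e ≠ 0 := hnz₁ e (Finset.mem_sdiff.mpr ⟨he,
          fun h => hnotboth e h h2⟩)
        have h1' : e ∉ P₁ := fun h => hnotboth e h h2
        simp only [mem_Fm, h1', h2, he, not_true_eq_false, not_false_eq_true,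
          true_and, false_and, and_false, and_true, false_or, or_false, if_false]
        rcases zmod22_cases (φ₁ e) hz with h | h | h <;> rw [h] <;> decide
      · have hz1 : φ₁ e ≠ 0 := hnz₁ e (Finset.mem_sdiff.mpr ⟨he, h1⟩)
        have hz2 : φ₂ e ≠ 0 := hnz₂ e (Finset.mem_sdiff.mpr ⟨he, h2⟩)
        simp only [mem_Fm, h1, h2, he, not_false_eq_true, true_and, false_and,
          and_false, and_true, false_or, or_false]
        rcases zmod22_cases (φ₁ e) hz1 with h | h | h <;>
          rcases zmod22_cases (φ₂ e) hz2 with h' | h' | h' <;>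
            rw [h, h'] <;> decide
end
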